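/- arXiv:0904.2626 — 6 statements merged into one kernel-verified Lean document; each statement's English description precedes it below -/
import Mathlib

section
/- The self-homeomorphisms x_i (i ≥ 0) of the non-negative reals, defined by t·x_i = t for t ≤ i, t·x_i = i + 2(t−i) for i ≤ t ≤ i+1, and t·x_i = t+1 for t ≥ i+1 (acting on the right), satisfy the relations x_j x_i = x_i x_{j+1} whenever i < j. -/
/-- The standard generators of Thompson's group `F`, acting on `ℝ≥0` (right action):
`t·x_i = t` for `t ≤ i`, `t·x_i = i + 2(t−i)` for `i ≤ t ≤ i+1`, `t·x_i = t+1` for `t ≥ i+1`. -/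
noncomputable def xF (i : ℕ) (t : ℝ) : ℝ :=
  if t ≤ i then t else if t ≤ i + 1 then i + 2 * (t - i) else t + 1

/-- The relations `x_j x_i = x_i x_{j+1}` for `i < j` (right action: `x_j` applied first on the
left-hand side, `x_i` first on the right-hand side). -/
theorem xF_relation (i j : ℕ) (hij : i < j) :
    ∀ t : ℝ, 0 ≤ t → xF i (xF j t) = xF (j + 1) (xF i t) := by
  intro t ht
  have hij' : (i : ℝ) + 1 ≤ j := by exact_mod_cast hij
  unfold xF
  push_cast
  split_ifs <;> linarith
end

section
/- In Thompson's group F with infinite presentation ⟨x_0, x_1, ... | x_j x_i = x_i x_{j+1}, i < j⟩, for every integer i ≥ 1 one has c^{i} = x_0² x_1^{2i} x_{2i+1}^{-2} x_{2i-1}^{-2} ⋯ x_5^{-2} x_3^{-2} x_0^{-2}, where c = x_0² x_1² x_3^{-2} x_0^{-2}. -/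
/-- The defining relators of Thompson's group `F`:
`x_j x_i x_{j+1}⁻¹ x_i⁻¹` for `i < j`, encoding `x_j x_i = x_i x_{j+1}`. -/
def thompsonRels : Set (FreeGroup ℕ) :=
  {r | ∃ i j : ℕ, i < j ∧
    r = FreeGroup.of j * FreeGroup.of i * (FreeGroup.of (j + 1))⁻¹ * (FreeGroup.of i)⁻¹}

/-- Thompson's group `F`, via its infinite presentation
`⟨x_0, x_1, … | x_j x_i = x_i x_{j+1} for i < j⟩`. -/
abbrev ThompsonF : Type := PresentedGroup thompsonRels

/-- The generator `x_n` of Thompson's group `F`. -/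
def x (n : ℕ) : ThompsonF := PresentedGroup.of n

lemma x_rel {i j : ℕ} (h : i < j) : x j * x i = x i * x (j + 1) := by
  have hmem : FreeGroup.of j * FreeGroup.of i * (FreeGroup.of (j + 1))⁻¹ * (FreeGroup.of i)⁻¹
      ∈ thompsonRels := ⟨i, j, h, rfl⟩
  have h1 : x j * x i * (x (j + 1))⁻¹ * (x i)⁻¹ = 1 := by
    have : PresentedGroup.mk thompsonRels
        (FreeGroup.of j * FreeGroup.of i * (FreeGroup.of (j + 1))⁻¹ * (FreeGroup.of i)⁻¹) = 1 :=
      (QuotientGroup.eq_one_iff _).mpr (Subgroup.subset_normalClosure hmem)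
    simpa [map_mul, map_inv, x, PresentedGroup.of] using this
  calc x j * x i
      = (x j * x i * (x (j + 1))⁻¹ * (x i)⁻¹) * (x i * x (j + 1)) := by group
    _ = x i * x (j + 1) := by rw [h1, one_mul]

lemma hz (g : ThompsonF) : g ^ (-2 : ℤ) = g⁻¹ * g⁻¹ := by group

lemma shift (m : ℕ) (hm : 1 < m) :
    x m ^ (-2 : ℤ) * x 1 ^ 2 = x 1 ^ 2 * x (m + 2) ^ (-2 : ℤ) := by
  have r1 := x_rel hm
  have r2 : x (m + 1) * x 1 = x 1 * (x (m + 1 + 1)) := x_rel (by omega)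
  have e1 : (x m)⁻¹ * x 1 = x 1 * (x (m + 1))⁻¹ := by
    rw [eq_mul_inv_iff_mul_eq, mul_assoc, ← r1, ← mul_assoc, inv_mul_cancel, one_mul]
  have e2 : (x (m + 1))⁻¹ * x 1 = x 1 * (x (m + 2))⁻¹ := by
    rw [eq_mul_inv_iff_mul_eq, mul_assoc, ← r2, ← mul_assoc, inv_mul_cancel, one_mul]
  have e1' : ∀ t, (x m)⁻¹ * (x 1 * t) = x 1 * ((x (m + 1))⁻¹ * t) := fun t => by
    rw [← mul_assoc, e1, mul_assoc]
  have e2' : ∀ t, (x (m + 1))⁻¹ * (x 1 * t) = x 1 * ((x (m + 2))⁻¹ * t) := fun t => by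
    rw [← mul_assoc, e2, mul_assoc]
  rw [hz, hz, pow_two]
  simp only [mul_assoc, e1, e1', e2, e2']

lemma shift_list (l : List ℕ) (h : ∀ m ∈ l, 1 < m) :
    (l.map (fun m => x m ^ (-2 : ℤ))).prod * x 1 ^ 2
      = x 1 ^ 2 * (l.map (fun m => x (m + 2) ^ (-2 : ℤ))).prod := by
  induction l with
  | nil => simp
  | cons a t ih =>
    simp only [List.map_cons, List.prod_cons, mul_assoc]
    rw [ih (fun m hm => h m (List.mem_cons_of_mem a hm)), ← mul_assoc,
      shift a (h a List.mem_cons_self), mul_assoc]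

/-- With `c = x_0² x_1² x_3⁻² x_0⁻²`, for every `i ≥ 1` one has
`cⁱ = x_0² x_1^{2i} x_{2i+1}⁻² x_{2i-1}⁻² ⋯ x_5⁻² x_3⁻² x_0⁻²`
(the middle factor is the descending product of the odd-index generators
`x_{2i+1}, x_{2i-1}, …, x_3`, each to the power `−2`). -/
theorem c_pow_normal_form (i : ℕ) (hi : 1 ≤ i) (c : ThompsonF)
    (hc : c = x 0 ^ 2 * x 1 ^ 2 * (x 3) ^ (-2 : ℤ) * (x 0) ^ (-2 : ℤ)) :
    c ^ i = x 0 ^ 2 * x 1 ^ (2 * i) *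
      ((List.range i).map (fun k => (x (2 * i + 1 - 2 * k)) ^ (-2 : ℤ))).prod *
      (x 0) ^ (-2 : ℤ) := by
  induction i, hi using Nat.le_induction with
  | base => simp [hc, show List.range 1 = [0] from rfl]
  | succ n hn ih =>
    have key : ((List.range n).map (fun k => x (2 * n + 1 - 2 * k) ^ (-2 : ℤ))).prod * x 1 ^ 2
        = x 1 ^ 2 * ((List.range n).map (fun k => x (2 * (n + 1) + 1 - 2 * k) ^ (-2 : ℤ))).prod := by
      have hmem : ∀ m ∈ (List.range n).map (fun k => 2 * n + 1 - 2 * k), 1 < m := by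
        intro m hm
        simp only [List.mem_map, List.mem_range] at hm
        obtain ⟨k, hk, rfl⟩ := hm
        omega
      have := shift_list ((List.range n).map (fun k => 2 * n + 1 - 2 * k)) hmem
      simp only [List.map_map, Function.comp_def] at this
      rw [this]
      congr 1
      exact congrArg List.prod (List.map_congr_left fun k hk => by
        simp only [List.mem_range] at hk
        have h : 2 * n + 1 - 2 * k + 2 = 2 * (n + 1) + 1 - 2 * k := by omega
        rw [h])
    have hx0 : (x 0) ^ (-2 : ℤ) * x 0 ^ 2 = 1 := by group
    rw [pow_succ, ih, hc]
    rw [List.range_succ]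
    simp only [List.map_append, List.prod_append, List.map_cons, List.map_nil, List.prod_cons,
      List.prod_nil, mul_one]
    have h3 : 2 * (n + 1) + 1 - 2 * n = 3 := by omega
    rw [h3]
    have hpow : x 1 ^ (2 * (n + 1)) = x 1 ^ (2 * n) * x 1 ^ 2 := by
      rw [← pow_add]; ring_nf
    rw [hpow]
    calc x 0 ^ 2 * x 1 ^ (2 * n) *
          ((List.range n).map (fun k => x (2 * n + 1 - 2 * k) ^ (-2 : ℤ))).prod *
          x 0 ^ (-2 : ℤ) * (x 0 ^ 2 * x 1 ^ 2 * x 3 ^ (-2 : ℤ) * x 0 ^ (-2 : ℤ))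
        = x 0 ^ 2 * x 1 ^ (2 * n) *
          (((List.range n).map (fun k => x (2 * n + 1 - 2 * k) ^ (-2 : ℤ))).prod * x 1 ^ 2) *
          (x 3 ^ (-2 : ℤ) * x 0 ^ (-2 : ℤ)) := by
          simp only [mul_assoc]
          rw [← mul_assoc (x 0 ^ (-2 : ℤ)) (x 0 ^ 2), hx0, one_mul]
      _ = x 0 ^ 2 * (x 1 ^ (2 * n) * x 1 ^ 2) *
          (((List.range n).map (fun k => x (2 * (n + 1) + 1 - 2 * k) ^ (-2 : ℤ))).prod *
            x 3 ^ (-2 : ℤ)) * x 0 ^ (-2 : ℤ) := by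
          rw [key]; simp only [mul_assoc]
      _ = _ := by simp only [mul_assoc]
end

section
/- In Thompson's group F (infinite presentation), let p = x_0³ x_1^{2i+1} x_{2i+5}³ x_{2i+6}^{-2} x_{2i+4}^{-1} x_2^{-1} x_1^{-2i} x_0^{-3} for some i ≥ 1, and set q = x_1^{-1} p x_1 p^{-1}. Then q = x_1² x_2 x_1^{-3}; consequently h := x_1^{-2} q x_1² equals x_2 x_1^{-1} = (x_1 x_2^{-1})^{-1} and k := x_1 h x_1^{-1} equals x_1 x_2 x_1^{-2} = (x_1² x_2^{-1} x_1^{-1})^{-1}. -/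
lemma xrel {m j : ℕ} (h : m < j) : x j * x m = x m * x (j + 1) := by
  have h1 : (PresentedGroup.mk thompsonRels)
      (FreeGroup.of j * FreeGroup.of m * (FreeGroup.of (j + 1))⁻¹ * (FreeGroup.of m)⁻¹) = 1 :=
    (QuotientGroup.eq_one_iff _).mpr (Subgroup.subset_normalClosure ⟨m, j, h, rfl⟩)
  simp only [map_mul, map_inv] at h1
  have h2 : x j * x m * (x (j + 1))⁻¹ * (x m)⁻¹ = 1 := h1
  rw [mul_inv_eq_one, mul_inv_eq_iff_eq_mul] at h2
  exact h2

lemma c1 {m j : ℕ} (h : m < j) {k : ℕ} (hk : k = j + 1) : x j * x m = x m * x k := by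
  subst hk; exact xrel h

lemma c2 {m j : ℕ} (h : m < j) {k : ℕ} (hk : k = j + 1) : x m * (x k)⁻¹ = (x j)⁻¹ * x m := by
  subst hk
  have h1 := xrel h
  calc x m * (x (j + 1))⁻¹ = (x j)⁻¹ * ((x j * x m) * (x (j + 1))⁻¹) := by group
    _ = (x j)⁻¹ * ((x m * x (j + 1)) * (x (j + 1))⁻¹) := by rw [h1]
    _ = (x j)⁻¹ * x m := by group

lemma c3 {m j : ℕ} (h : m < j) {k : ℕ} (hk : k = j + 1) : (x m)⁻¹ * x j = x k * (x m)⁻¹ := by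
  subst hk
  have h1 := xrel h
  calc (x m)⁻¹ * x j = (x m)⁻¹ * ((x j * x m) * (x m)⁻¹) := by group
    _ = (x m)⁻¹ * ((x m * x (j + 1)) * (x m)⁻¹) := by rw [h1]
    _ = x (j + 1) * (x m)⁻¹ := by group

/-- move `(x m)^n` right past a letter `x k`, lowering the index by `n`. -/
lemma d1 {m j : ℕ} (h : m < j) (n : ℕ) {k : ℕ} (hk : k = j + n) :
    (x m) ^ n * x k = x j * (x m) ^ n := by
  subst hk
  induction n with
  | zero => simp
  | succ n ih =>
    have hmn : m < j + n := lt_of_lt_of_le h (Nat.le_add_right j n)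
    calc (x m) ^ (n + 1) * x (j + (n + 1))
        = (x m) ^ n * (x m * x (j + n + 1)) := by rw [pow_succ]; group
      _ = (x m) ^ n * (x (j + n) * x m) := by rw [← c1 hmn rfl]
      _ = ((x m) ^ n * x (j + n)) * x m := by group
      _ = (x j * (x m) ^ n) * x m := by rw [ih]
      _ = x j * (x m) ^ (n + 1) := by rw [pow_succ]; group

lemma d2 {m j : ℕ} (h : m < j) (n : ℕ) {k : ℕ} (hk : k = j + n) :
    (x m) ^ n * (x k)⁻¹ = (x j)⁻¹ * (x m) ^ n := by
  subst hk
  induction n with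
  | zero => simp
  | succ n ih =>
    have hmn : m < j + n := lt_of_lt_of_le h (Nat.le_add_right j n)
    calc (x m) ^ (n + 1) * (x (j + (n + 1)))⁻¹
        = (x m) ^ n * (x m * (x (j + n + 1))⁻¹) := by rw [pow_succ]; group
      _ = (x m) ^ n * ((x (j + n))⁻¹ * x m) := by rw [c2 hmn rfl]
      _ = ((x m) ^ n * (x (j + n))⁻¹) * x m := by group
      _ = ((x j)⁻¹ * (x m) ^ n) * x m := by rw [ih]
      _ = (x j)⁻¹ * (x m) ^ (n + 1) := by rw [pow_succ]; group

lemma d3 {m j : ℕ} (h : m < j) (n : ℕ) {k : ℕ} (hk : k = j + n) :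
    ((x m) ^ n)⁻¹ * x j = x k * ((x m) ^ n)⁻¹ := by
  subst hk
  induction n with
  | zero => simp
  | succ n ih =>
    have hmn : m < j + n := lt_of_lt_of_le h (Nat.le_add_right j n)
    calc ((x m) ^ (n + 1))⁻¹ * x j
        = (x m)⁻¹ * (((x m) ^ n)⁻¹ * x j) := by rw [pow_succ]; group
      _ = (x m)⁻¹ * (x (j + n) * ((x m) ^ n)⁻¹) := by rw [ih]
      _ = ((x m)⁻¹ * x (j + n)) * ((x m) ^ n)⁻¹ := by group
      _ = (x (j + n + 1) * (x m)⁻¹) * ((x m) ^ n)⁻¹ := by rw [c3 hmn rfl]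
      _ = x (j + (n + 1)) * ((x m) ^ (n + 1))⁻¹ := by rw [pow_succ]; group

/-- move `(x m)^n` right past `(x k)^s`. -/
lemma q1 {m j : ℕ} (h : m < j) (n : ℕ) {k : ℕ} (hk : k = j + n) (s : ℕ) :
    (x m) ^ n * (x k) ^ s = (x j) ^ s * (x m) ^ n := by
  induction s with
  | zero => simp
  | succ s ih =>
    calc (x m) ^ n * (x k) ^ (s + 1)
        = ((x m) ^ n * (x k) ^ s) * x k := by rw [pow_succ]; group
      _ = (x j) ^ s * ((x m) ^ n * x k) := by rw [ih]; group
      _ = (x j) ^ s * (x j * (x m) ^ n) := by rw [d1 h n hk]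
      _ = (x j) ^ (s + 1) * (x m) ^ n := by rw [pow_succ']; group

lemma q2 {m j : ℕ} (h : m < j) (n : ℕ) {k : ℕ} (hk : k = j + n) (s : ℕ) :
    (x m) ^ n * ((x k) ^ s)⁻¹ = ((x j) ^ s)⁻¹ * (x m) ^ n := by
  have h1 := q1 h n hk s
  calc (x m) ^ n * ((x k) ^ s)⁻¹
      = ((x j) ^ s)⁻¹ * (((x j) ^ s * (x m) ^ n) * ((x k) ^ s)⁻¹) := by group
    _ = ((x j) ^ s)⁻¹ * (((x m) ^ n * (x k) ^ s) * ((x k) ^ s)⁻¹) := by rw [h1]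
    _ = ((x j) ^ s)⁻¹ * (x m) ^ n := by group

/-- The central conjugation computation inside Thompson's group. -/
lemma middle (i : ℕ) (A : ThompsonF)
    (hA : A = x 1 ^ (2 * i + 1) * (x (2 * i + 5)) ^ 3 * ((x (2 * i + 6)) ^ 2)⁻¹ *
      (x (2 * i + 4))⁻¹ * (x 2)⁻¹ * ((x 1) ^ (2 * i))⁻¹) :
    (x 4)⁻¹ * A * x 4 * A⁻¹ = (x 4) ^ 2 * x 5 * ((x 4) ^ 3)⁻¹ := by
  have f1 : (x 4)⁻¹ * (x 1) ^ (2 * i + 1) = (x 1) ^ (2 * i + 1) * (x (2 * i + 5))⁻¹ :=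
    (d2 (by omega) (2 * i + 1) (by omega)).symm
  have f2 : ((x 1) ^ (2 * i))⁻¹ * x 4 = x (2 * i + 4) * ((x 1) ^ (2 * i))⁻¹ :=
    d3 (by omega) (2 * i) (by omega)
  have f3 : (x 2)⁻¹ * x (2 * i + 4) = x (2 * i + 5) * (x 2)⁻¹ :=
    c3 (by omega) (by omega)
  have f4 : (x (2 * i + 4))⁻¹ * x (2 * i + 5) = x (2 * i + 6) * (x (2 * i + 4))⁻¹ :=
    c3 (by omega) (by omega)
  have gq1 : (x 1) ^ (2 * i + 1) * (x (2 * i + 5)) ^ 2 = (x 4) ^ 2 * (x 1) ^ (2 * i + 1) :=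
    q1 (by omega) (2 * i + 1) (by omega) 2
  have g2 : (x 1) ^ (2 * i + 1) * x (2 * i + 6) = x 5 * (x 1) ^ (2 * i + 1) :=
    d1 (by omega) (2 * i + 1) (by omega)
  have gq2 : (x 1) ^ (2 * i + 1) * ((x (2 * i + 5)) ^ 3)⁻¹ = ((x 4) ^ 3)⁻¹ * (x 1) ^ (2 * i + 1) :=
    q2 (by omega) (2 * i + 1) (by omega) 3
  calc (x 4)⁻¹ * A * x 4 * A⁻¹
      = ((x 4)⁻¹ * x 1 ^ (2 * i + 1)) * ((x (2 * i + 5)) ^ 3 * ((x (2 * i + 6)) ^ 2)⁻¹ *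
        (x (2 * i + 4))⁻¹ * (x 2)⁻¹ * (((x 1) ^ (2 * i))⁻¹ * x 4)) * A⁻¹ := by rw [hA]; group
    _ = ((x 1) ^ (2 * i + 1) * (x (2 * i + 5))⁻¹) * ((x (2 * i + 5)) ^ 3 * ((x (2 * i + 6)) ^ 2)⁻¹ *
        (x (2 * i + 4))⁻¹ * (x 2)⁻¹ * (x (2 * i + 4) * ((x 1) ^ (2 * i))⁻¹)) * A⁻¹ := by
        rw [f1, f2]
    _ = (x 1) ^ (2 * i + 1) * (x (2 * i + 5)) ^ 2 * ((x (2 * i + 6)) ^ 2)⁻¹ *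
        (x (2 * i + 4))⁻¹ * ((x 2)⁻¹ * x (2 * i + 4)) * (((x 1) ^ (2 * i))⁻¹ * A⁻¹) := by group
    _ = (x 1) ^ (2 * i + 1) * (x (2 * i + 5)) ^ 2 * ((x (2 * i + 6)) ^ 2)⁻¹ *
        (x (2 * i + 4))⁻¹ * (x (2 * i + 5) * (x 2)⁻¹) * (((x 1) ^ (2 * i))⁻¹ * A⁻¹) := by rw [f3]
    _ = (x 1) ^ (2 * i + 1) * (x (2 * i + 5)) ^ 2 * ((x (2 * i + 6)) ^ 2)⁻¹ *
        ((x (2 * i + 4))⁻¹ * x (2 * i + 5)) * ((x 2)⁻¹ * ((x 1) ^ (2 * i))⁻¹ * A⁻¹) := by group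
    _ = (x 1) ^ (2 * i + 1) * (x (2 * i + 5)) ^ 2 * ((x (2 * i + 6)) ^ 2)⁻¹ *
        (x (2 * i + 6) * (x (2 * i + 4))⁻¹) * ((x 2)⁻¹ * ((x 1) ^ (2 * i))⁻¹ * A⁻¹) := by rw [f4]
    _ = ((x 1) ^ (2 * i + 1) * (x (2 * i + 5)) ^ 2) *
        (x (2 * i + 6) * (((x (2 * i + 5)) ^ 3)⁻¹ * ((x 1) ^ (2 * i + 1))⁻¹)) := by rw [hA]; group
    _ = ((x 4) ^ 2 * (x 1) ^ (2 * i + 1)) *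
        (x (2 * i + 6) * (((x (2 * i + 5)) ^ 3)⁻¹ * ((x 1) ^ (2 * i + 1))⁻¹)) := by rw [gq1]
    _ = (x 4) ^ 2 * ((x 1) ^ (2 * i + 1) * x (2 * i + 6)) *
        (((x (2 * i + 5)) ^ 3)⁻¹ * ((x 1) ^ (2 * i + 1))⁻¹) := by group
    _ = (x 4) ^ 2 * (x 5 * (x 1) ^ (2 * i + 1)) *
        (((x (2 * i + 5)) ^ 3)⁻¹ * ((x 1) ^ (2 * i + 1))⁻¹) := by rw [g2]
    _ = (x 4) ^ 2 * x 5 * ((x 1) ^ (2 * i + 1) * ((x (2 * i + 5)) ^ 3)⁻¹) *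
        ((x 1) ^ (2 * i + 1))⁻¹ := by group
    _ = (x 4) ^ 2 * x 5 * (((x 4) ^ 3)⁻¹ * (x 1) ^ (2 * i + 1)) *
        ((x 1) ^ (2 * i + 1))⁻¹ := by rw [gq2]
    _ = (x 4) ^ 2 * x 5 * ((x 4) ^ 3)⁻¹ := by group

lemma key (i : ℕ) (A : ThompsonF)
    (hA : A = x 1 ^ (2 * i + 1) * (x (2 * i + 5)) ^ 3 * ((x (2 * i + 6)) ^ 2)⁻¹ *
      (x (2 * i + 4))⁻¹ * (x 2)⁻¹ * ((x 1) ^ (2 * i))⁻¹) :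
    (x 1)⁻¹ * (x 0 ^ 3 * A * (x 0 ^ 3)⁻¹) * x 1 * (x 0 ^ 3 * A * (x 0 ^ 3)⁻¹)⁻¹ =
      x 1 ^ 2 * x 2 * ((x 1) ^ 3)⁻¹ := by
  have e1 : (x 1)⁻¹ * x 0 ^ 3 = x 0 ^ 3 * (x 4)⁻¹ := (d2 (by omega) 3 (by omega)).symm
  have e2 : (x 0 ^ 3)⁻¹ * x 1 = x 4 * (x 0 ^ 3)⁻¹ := d3 (by omega) 3 (by omega)
  have g4 : x 0 ^ 3 * (x 4) ^ 2 = (x 1) ^ 2 * x 0 ^ 3 := q1 (by omega) 3 (by omega) 2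
  have g5 : x 0 ^ 3 * x 5 = x 2 * x 0 ^ 3 := d1 (by omega) 3 (by omega)
  have g6 : x 0 ^ 3 * ((x 4) ^ 3)⁻¹ = ((x 1) ^ 3)⁻¹ * x 0 ^ 3 := q2 (by omega) 3 (by omega) 3
  calc (x 1)⁻¹ * (x 0 ^ 3 * A * (x 0 ^ 3)⁻¹) * x 1 * (x 0 ^ 3 * A * (x 0 ^ 3)⁻¹)⁻¹
      = ((x 1)⁻¹ * x 0 ^ 3) * A * ((x 0 ^ 3)⁻¹ * x 1) * (x 0 ^ 3 * A⁻¹ * (x 0 ^ 3)⁻¹) := by group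
    _ = (x 0 ^ 3 * (x 4)⁻¹) * A * (x 4 * (x 0 ^ 3)⁻¹) * (x 0 ^ 3 * A⁻¹ * (x 0 ^ 3)⁻¹) := by
        rw [e1, e2]
    _ = x 0 ^ 3 * ((x 4)⁻¹ * A * x 4 * A⁻¹) * (x 0 ^ 3)⁻¹ := by group
    _ = x 0 ^ 3 * ((x 4) ^ 2 * x 5 * ((x 4) ^ 3)⁻¹) * (x 0 ^ 3)⁻¹ := by rw [middle i A hA]
    _ = (x 0 ^ 3 * (x 4) ^ 2) * (x 5 * (((x 4) ^ 3)⁻¹ * (x 0 ^ 3)⁻¹)) := by group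
    _ = ((x 1) ^ 2 * x 0 ^ 3) * (x 5 * (((x 4) ^ 3)⁻¹ * (x 0 ^ 3)⁻¹)) := by rw [g4]
    _ = (x 1) ^ 2 * (x 0 ^ 3 * x 5) * (((x 4) ^ 3)⁻¹ * (x 0 ^ 3)⁻¹) := by group
    _ = (x 1) ^ 2 * (x 2 * x 0 ^ 3) * (((x 4) ^ 3)⁻¹ * (x 0 ^ 3)⁻¹) := by rw [g5]
    _ = (x 1) ^ 2 * x 2 * (x 0 ^ 3 * ((x 4) ^ 3)⁻¹) * (x 0 ^ 3)⁻¹ := by group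
    _ = (x 1) ^ 2 * x 2 * (((x 1) ^ 3)⁻¹ * x 0 ^ 3) * (x 0 ^ 3)⁻¹ := by rw [g6]
    _ = x 1 ^ 2 * x 2 * ((x 1) ^ 3)⁻¹ := by group

/-- With `p = x_0³ x_1^{2i+1} x_{2i+5}³ x_{2i+6}⁻² x_{2i+4}⁻¹ x_2⁻¹ x_1^{-2i} x_0⁻³` (for some
`i ≥ 1`) and `q = x_1⁻¹ p x_1 p⁻¹`, one has `q = x_1² x_2 x_1⁻³`; consequently
`h = x_1⁻² q x_1²` equals `x_2 x_1⁻¹ = (x_1 x_2⁻¹)⁻¹ = w_1⁻¹` and `k = x_1 h x_1⁻¹` equals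
`x_1 x_2 x_1⁻² = (x_1² x_2⁻¹ x_1⁻¹)⁻¹ = y_1⁻¹`. -/
theorem q_h_k_normal_form (i : ℕ) (hi : 1 ≤ i) (p q h k : ThompsonF)
    (hp : p = x 0 ^ 3 * x 1 ^ (2 * i + 1) * (x (2 * i + 5)) ^ 3 * (x (2 * i + 6)) ^ (-2 : ℤ) *
      (x (2 * i + 4))⁻¹ * (x 2)⁻¹ * (x 1) ^ (-(2 * i : ℤ)) * (x 0) ^ (-3 : ℤ))
    (hq : q = (x 1)⁻¹ * p * x 1 * p⁻¹)
    (hh : h = (x 1) ^ (-2 : ℤ) * q * x 1 ^ 2)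
    (hk : k = x 1 * h * (x 1)⁻¹) :
    q = x 1 ^ 2 * x 2 * (x 1) ^ (-3 : ℤ) ∧
      h = x 2 * (x 1)⁻¹ ∧ h = (x 1 * (x 2)⁻¹)⁻¹ ∧
      k = x 1 * x 2 * (x 1) ^ (-2 : ℤ) ∧ k = (x 1 ^ 2 * (x 2)⁻¹ * (x 1)⁻¹)⁻¹ := by
  have hp' : p = x 0 ^ 3 * (x 1 ^ (2 * i + 1) * (x (2 * i + 5)) ^ 3 * ((x (2 * i + 6)) ^ 2)⁻¹ *
      (x (2 * i + 4))⁻¹ * (x 2)⁻¹ * ((x 1) ^ (2 * i))⁻¹) * (x 0 ^ 3)⁻¹ := by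
    rw [hp]; group
  have hq' : q = x 1 ^ 2 * x 2 * (x 1) ^ (-3 : ℤ) := by
    rw [hq, hp']
    rw [key i _ rfl]
    group
  subst hk; subst hh
  refine ⟨hq', ?_, ?_, ?_, ?_⟩ <;> rw [hq'] <;> group
end

section
/- For m ≥ 1, the element g = (w_0^{-2} w_2^{2})(w_4^{-2} w_6^{2}) ⋯ (w_{4(m-1)}^{-2} w_{4(m-1)+2}^{2}) of Thompson's group F (ℝ≥0 model, where w_i = x_i x_{i+1}^{-1}) has support contained in [0, 4m], fixes every multiple of 4 in [0, 4m] and every odd multiple of 2 in [0, 4m], moves no point by more than 1, and satisfies t·g > t for t in (4k+2, 4k+4) and t·g < t for t in (4k, 4k+2) for each 0 ≤ k < m (so the multiples of 4 are attracting and the odd multiples of 2 are repelling fixed points of positive powers of g). -/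
/-- The inverse of `x_i`. -/
noncomputable def xFinv (i : ℕ) (t : ℝ) : ℝ :=
  if t ≤ i then t else if t ≤ i + 2 then i + (t - i) / 2 else t - 1

/-- `w_i = x_i x_{i+1}⁻¹` (right action: `x_i` applied first). -/
noncomputable def wF (i : ℕ) (t : ℝ) : ℝ := xFinv (i + 1) (xF i t)

/-- `w_i⁻¹ = x_{i+1} x_i⁻¹`. -/
noncomputable def wFinv (i : ℕ) (t : ℝ) : ℝ := xFinv i (xF (i + 1) t)

/-- The block `w_{4k}⁻² w_{4k+2}²` (right action). -/
noncomputable def block (k : ℕ) (t : ℝ) : ℝ :=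
  wF (4 * k + 2) (wF (4 * k + 2) (wFinv (4 * k) (wFinv (4 * k) t)))

/-- `g = (w_0⁻² w_2²)(w_4⁻² w_6²) ⋯ (w_{4(m-1)}⁻² w_{4(m-1)+2}²)` (right action). -/
noncomputable def gBlocks : ℕ → ℝ → ℝ
  | 0 => fun t => t
  | m + 1 => fun t => block m (gBlocks m t)

lemma wF_fix_le (i : ℕ) (t : ℝ) (h : t ≤ (i:ℝ)) : wF i t = t := by
  simp only [wF, xF, xFinv]; push_cast; split_ifs <;> linarith

lemma wF_fix_ge (i : ℕ) (t : ℝ) (h : (i:ℝ) + 2 ≤ t) : wF i t = t := by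
  simp only [wF, xF, xFinv]; push_cast; split_ifs <;> linarith

lemma wFinv_fix_le (i : ℕ) (t : ℝ) (h : t ≤ (i:ℝ)) : wFinv i t = t := by
  simp only [wFinv, xF, xFinv]; push_cast; split_ifs <;> linarith

lemma wFinv_fix_ge (i : ℕ) (t : ℝ) (h : (i:ℝ) + 2 ≤ t) : wFinv i t = t := by
  simp only [wFinv, xF, xFinv]; push_cast; split_ifs <;> linarith

lemma wF_mid (i : ℕ) (t : ℝ) (h1 : (i:ℝ) < t) (h2 : t < (i:ℝ) + 2) :
    t < wF i t ∧ wF i t < (i:ℝ) + 2 ∧ wF i t ≤ t + 1/2 := by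
  simp only [wF, xF, xFinv]; push_cast
  refine ⟨?_, ?_, ?_⟩ <;> (split_ifs <;> linarith)

lemma wFinv_mid (i : ℕ) (t : ℝ) (h1 : (i:ℝ) < t) (h2 : t < (i:ℝ) + 2) :
    (i:ℝ) < wFinv i t ∧ wFinv i t < t ∧ t ≤ wFinv i t + 1/2 := by
  simp only [wFinv, xF, xFinv]; push_cast
  refine ⟨?_, ?_, ?_⟩ <;> (split_ifs <;> linarith)

lemma cast4k (k : ℕ) : ((4 * k : ℕ) : ℝ) = 4 * (k : ℝ) := by push_cast; ring
lemma cast4k2 (k : ℕ) : ((4 * k + 2 : ℕ) : ℝ) = 4 * (k : ℝ) + 2 := by push_cast; ring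

lemma block_fix_le (k : ℕ) (t : ℝ) (h : t ≤ 4 * (k:ℝ)) : block k t = t := by
  have h1 : t ≤ ((4*k : ℕ) : ℝ) := by rw [cast4k]; exact h
  have h2 : t ≤ ((4*k+2 : ℕ) : ℝ) := by rw [cast4k2]; linarith
  simp only [block, wFinv_fix_le _ _ h1, wF_fix_le _ _ h2]

lemma block_fix_ge (k : ℕ) (t : ℝ) (h : 4 * (k:ℝ) + 4 ≤ t) : block k t = t := by
  have h1 : ((4*k : ℕ) : ℝ) + 2 ≤ t := by rw [cast4k]; linarith
  have h2 : ((4*k+2 : ℕ) : ℝ) + 2 ≤ t := by rw [cast4k2]; linarith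
  simp only [block, wFinv_fix_ge _ _ h1, wF_fix_ge _ _ h2]

lemma block_fix_mid (k : ℕ) : block k (4 * (k:ℝ) + 2) = 4 * (k:ℝ) + 2 := by
  have h1 : ((4*k : ℕ) : ℝ) + 2 ≤ 4 * (k:ℝ) + 2 := by rw [cast4k]
  have h2 : 4 * (k:ℝ) + 2 ≤ ((4*k+2 : ℕ) : ℝ) := by rw [cast4k2]
  simp only [block, wFinv_fix_ge _ _ h1, wF_fix_le _ _ h2]

lemma block_lo (k : ℕ) (t : ℝ) (h1 : 4 * (k:ℝ) < t) (h2 : t < 4 * (k:ℝ) + 2) :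
    4 * (k:ℝ) < block k t ∧ block k t < t ∧ t ≤ block k t + 1 := by
  have c := cast4k k
  obtain ⟨a1, a2, a3⟩ := wFinv_mid (4*k) t (by rw [c]; exact h1) (by rw [c]; linarith)
  push_cast at a1 a2 a3
  obtain ⟨b1, b2, b3⟩ := wFinv_mid (4*k) (wFinv (4*k) t) (by push_cast; linarith) (by push_cast; linarith)
  push_cast at b1 b2 b3
  have hle : wFinv (4*k) (wFinv (4*k) t) ≤ ((4*k+2 : ℕ) : ℝ) := by rw [cast4k2]; linarith
  simp only [block, wF_fix_le _ _ hle]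
  exact ⟨b1, by linarith, by linarith⟩

lemma block_hi (k : ℕ) (t : ℝ) (h1 : 4 * (k:ℝ) + 2 < t) (h2 : t < 4 * (k:ℝ) + 4) :
    t < block k t ∧ block k t < 4 * (k:ℝ) + 4 ∧ block k t ≤ t + 1 := by
  have c := cast4k2 k
  have hge : ((4*k : ℕ) : ℝ) + 2 ≤ t := by rw [cast4k]; linarith
  obtain ⟨a1, a2, a3⟩ := wF_mid (4*k+2) t (by rw [c]; exact h1) (by rw [c]; linarith)
  push_cast at a1 a2 a3
  obtain ⟨b1, b2, b3⟩ := wF_mid (4*k+2) (wF (4*k+2) t) (by push_cast; linarith) (by push_cast; linarith)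
  push_cast at b1 b2 b3
  simp only [block, wFinv_fix_ge _ _ hge]
  exact ⟨by linarith, by linarith, by linarith⟩

lemma block_bound (k : ℕ) (t : ℝ) (h1 : 4 * (k:ℝ) ≤ t) (h2 : t ≤ 4 * (k:ℝ) + 4) :
    4 * (k:ℝ) ≤ block k t ∧ block k t ≤ 4 * (k:ℝ) + 4 ∧ |block k t - t| ≤ 1 := by
  rcases eq_or_lt_of_le h1 with h | h
  · rw [block_fix_le k t h.ge]; refine ⟨h1, h2, by simp⟩
  rcases eq_or_lt_of_le h2 with h' | h'
  · rw [h', block_fix_ge k _ le_rfl]; refine ⟨by linarith, le_rfl, by simp⟩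
  rcases lt_trichotomy t (4 * (k:ℝ) + 2) with hm | hm | hm
  · obtain ⟨p1, p2, p3⟩ := block_lo k t h hm
    exact ⟨le_of_lt p1, by linarith, abs_le.2 ⟨by linarith, by linarith⟩⟩
  · rw [hm, block_fix_mid]; exact ⟨by linarith, by linarith, by simp⟩
  · obtain ⟨p1, p2, p3⟩ := block_hi k t hm h'
    exact ⟨by linarith, le_of_lt p2, abs_le.2 ⟨by linarith, by linarith⟩⟩

lemma g_fix_left (m : ℕ) (t : ℝ) (h : t ≤ 0) : gBlocks m t = t := by
  induction m with
  | zero => rfl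
  | succ n ih =>
    show block n (gBlocks n t) = t
    rw [ih, block_fix_le n t (by have h0 : (0:ℝ) ≤ (n:ℝ) := Nat.cast_nonneg n; linarith)]

lemma g_fix_right (m : ℕ) (t : ℝ) (h : 4 * (m:ℝ) ≤ t) : gBlocks m t = t := by
  induction m with
  | zero => rfl
  | succ n ih =>
    have hc : 4 * ((n+1 : ℕ) : ℝ) = 4 * (n:ℝ) + 4 := by push_cast; ring
    rw [hc] at h
    show block n (gBlocks n t) = t
    rw [ih (by linarith), block_fix_ge n t h]

lemma g_eq_block (m k : ℕ) (hk : k < m) (t : ℝ)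
    (h1 : 4 * (k:ℝ) ≤ t) (h2 : t ≤ 4 * (k:ℝ) + 4) : gBlocks m t = block k t := by
  induction m with
  | zero => omega
  | succ n ih =>
    rcases Nat.lt_succ_iff_lt_or_eq.mp hk with h | h
    · show block n (gBlocks n t) = block k t
      rw [ih h]
      obtain ⟨p1, p2, _⟩ := block_bound k t h1 h2
      have hkn : 4 * (k:ℝ) + 4 ≤ 4 * (n:ℝ) := by
        have : (k:ℝ) + 1 ≤ (n:ℝ) := by exact_mod_cast h
        linarith
      exact block_fix_le n _ (by linarith)
    · subst h
      show block k (gBlocks k t) = block k t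
      rw [g_fix_right k t h1]


/-- For `m ≥ 1`, the element `g = (w_0⁻² w_2²) ⋯ (w_{4(m-1)}⁻² w_{4(m-1)+2}²)` has support in
`[0, 4m]`, fixes every multiple of `4` and every odd multiple of `2` in `[0, 4m]`, moves no
point by more than `1`, and satisfies `t·g > t` on each `(4k+2, 4k+4)` and `t·g < t` on each
`(4k, 4k+2)` for `0 ≤ k < m`. -/
theorem gBlocks_properties (m : ℕ) (hm : 1 ≤ m) :
    (∀ t : ℝ, gBlocks m t ≠ t → t ∈ Set.Icc (0 : ℝ) (4 * m)) ∧
    (∀ k : ℕ, k ≤ m → gBlocks m (4 * (k : ℝ)) = 4 * (k : ℝ)) ∧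
    (∀ k : ℕ, k < m → gBlocks m (4 * (k : ℝ) + 2) = 4 * (k : ℝ) + 2) ∧
    (∀ t : ℝ, |gBlocks m t - t| ≤ 1) ∧
    (∀ k : ℕ, k < m →
      (∀ t ∈ Set.Ioo (4 * (k : ℝ) + 2) (4 * (k : ℝ) + 4), t < gBlocks m t) ∧
      (∀ t ∈ Set.Ioo (4 * (k : ℝ)) (4 * (k : ℝ) + 2), gBlocks m t < t)) := by
  refine ⟨?_, ?_, ?_, ?_, ?_⟩
  · intro t ht
    by_contra hc
    simp only [Set.mem_Icc, not_and_or, not_le] at hc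
    rcases hc with hc | hc
    · exact ht (g_fix_left m t hc.le)
    · exact ht (g_fix_right m t hc.le)
  · intro k hk
    rcases eq_or_lt_of_le hk with h | h
    · subst h; exact g_fix_right k _ le_rfl
    · rw [g_eq_block m k h _ le_rfl (by linarith)]
      exact block_fix_le k _ le_rfl
  · intro k hk
    rw [g_eq_block m k hk _ (by linarith) (by linarith)]
    exact block_fix_mid k
  · intro t
    rcases le_or_gt t 0 with h | h
    · rw [g_fix_left m t h]; simp
    rcases le_or_gt (4 * (m:ℝ)) t with h' | h'
    · rw [g_fix_right m t h']; simp
    set k : ℕ := (⌊t / 4⌋).toNat with hkdef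
    have hfl : (0:ℤ) ≤ ⌊t / 4⌋ := Int.floor_nonneg.2 (by linarith)
    have hk1 : (k:ℝ) = (⌊t / 4⌋ : ℤ) := by
      rw [hkdef]; exact_mod_cast Int.toNat_of_nonneg hfl
    have hk2 : (k:ℝ) ≤ t / 4 := by rw [hk1]; exact Int.floor_le _
    have hk3 : t / 4 < (k:ℝ) + 1 := by rw [hk1]; exact Int.lt_floor_add_one _
    have hb1 : 4 * (k:ℝ) ≤ t := by linarith
    have hb2 : t < 4 * (k:ℝ) + 4 := by linarith
    have hkm : k < m := by
      by_contra hcon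
      push_neg at hcon
      have : (m:ℝ) ≤ (k:ℝ) := by exact_mod_cast hcon
      linarith
    rw [g_eq_block m k hkm t hb1 hb2.le]
    exact (block_bound k t hb1 hb2.le).2.2
  · intro k hk
    constructor
    · rintro t ⟨h1, h2⟩
      rw [g_eq_block m k hk t (by linarith) (by linarith)]
      exact (block_hi k t h1 h2).1
    · rintro t ⟨h1, h2⟩
      rw [g_eq_block m k hk t (by linarith) (by linarith)]
      exact (block_lo k t h1 h2).2.1
end

section
/- In the ℝ≥0 model of Thompson's group F, the element C = X_0² X_1² X_0^{-2} X_1^{-2} (where X_0 agrees with x_0 on [0, b−2], with the modified g_0 on [b−2, b+4m+3], and with x_0 on [b+4m+3, ∞), and X_1 is the conjugate of X_0 by translation by 1) has support in (b−5,∞) equal to the open interval (b − 9/2, b + 4m + 7/2), and every point η with b − 7/2 ≤ η < b + 4m + 7/2 satisfies η·C^{m+2} > b + 4m + 3 + 3/16. -/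
/-- The shape of the basic block `w_0²` on `[0,2]` (the identity elsewhere):
`0↦0`, `1/4↦1`, `1/2↦3/2`, `1↦7/4`, `2↦2`, affine in between. -/
noncomputable def blockUp (t : ℝ) : ℝ :=
  if t ≤ 0 then t
  else if t ≤ 1 / 4 then 4 * t
  else if t ≤ 1 / 2 then 2 * t + 1 / 2
  else if t ≤ 1 then t / 2 + 5 / 4
  else if t ≤ 2 then t / 4 + 3 / 2
  else t

/-- The shape of `w_0⁻²` on `[0,2]` (the identity elsewhere), inverse of `blockUp`. -/
noncomputable def blockDown (t : ℝ) : ℝ :=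
  if t ≤ 0 then t
  else if t ≤ 1 then t / 4
  else if t ≤ 3 / 2 then t / 2 - 1 / 4
  else if t ≤ 7 / 4 then 2 * t - 5 / 2
  else if t ≤ 2 then 4 * t - 6
  else t

/-- The unmodified block pattern `(w_0⁻² w_2²)(w_4⁻² w_6²)⋯`, in relative coordinates. -/
noncomputable def gmidRel (u : ℝ) : ℝ :=
  if u - 4 * (⌊u / 4⌋ : ℝ) ≤ 2 then 4 * (⌊u / 4⌋ : ℝ) + blockDown (u - 4 * (⌊u / 4⌋ : ℝ))
  else 4 * (⌊u / 4⌋ : ℝ) + 2 + blockUp (u - 4 * (⌊u / 4⌋ : ℝ) - 2)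

/-- The modified generator `X_0` of the paper, with parameters `m` and `b = 4l`:
it agrees with `x_0` on `[0, b−2]` and on `[b+4m+3, ∞)`, with the block function `g_0`
(a product of translated blocks `w_{b+4k}⁻² w_{b+4k+2}²`) on `[b, b+4m+2]`, and is modified
near the two ends (`[b−2, b]` and `[b+4m+2, b+4m+3]`) so as to interpolate with
translation by `1`. -/
noncomputable def X0fun (m l : ℕ) (t : ℝ) : ℝ :=
  if t ≤ 4 * (l : ℝ) - 3 / 2 then xF 0 t
  else if t ≤ 4 * (l : ℝ) - 1 then 4 * (l : ℝ) - 1 / 2 + (t - (4 * (l : ℝ) - 3 / 2)) / 2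
  else if t ≤ 4 * (l : ℝ) then 4 * (l : ℝ) - 1 / 4 + (t - (4 * (l : ℝ) - 1)) / 4
  else if t ≤ 4 * (l : ℝ) + 4 * m then 4 * (l : ℝ) + gmidRel (t - 4 * (l : ℝ))
  else if t ≤ 4 * (l : ℝ) + 4 * m + 2 then
    4 * (l : ℝ) + 4 * m + blockDown (t - (4 * (l : ℝ) + 4 * m))
  else if t ≤ 4 * (l : ℝ) + 4 * m + 9 / 4 then
    4 * (l : ℝ) + 4 * m + 2 + 4 * (t - (4 * (l : ℝ) + 4 * m + 2))
  else if t ≤ 4 * (l : ℝ) + 4 * m + 5 / 2 then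
    4 * (l : ℝ) + 4 * m + 3 + 2 * (t - (4 * (l : ℝ) + 4 * m + 9 / 4))
  else t + 1

/-- The modified generator `X_1`: the conjugate of `X_0` by translation by `1`. -/
noncomputable def X1fun (m l : ℕ) (t : ℝ) : ℝ := X0fun m l (t - 1) + 1

/-- `C = X_0² X_1² X_0⁻² X_1⁻²` as a self-map of `ℝ≥0` (right action), given inverse
functions for `X_0` and `X_1`. -/
noncomputable def Cfun (m l : ℕ) (X0i X1i : ℝ → ℝ) (t : ℝ) : ℝ :=
  X1i (X1i (X0i (X0i (X1fun m l (X1fun m l (X0fun m l (X0fun m l t)))))))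

-- monotonicity lemmas
lemma xF0_mono {u v : ℝ} (h : u ≤ v) : xF 0 u ≤ xF 0 v := by
  unfold xF; push_cast; split_ifs <;> linarith

lemma xF0_le (t : ℝ) : xF 0 t ≤ t + 1 := by
  unfold xF; push_cast; split_ifs <;> linarith

lemma blockDown_mono {u v : ℝ} (h : u ≤ v) : blockDown u ≤ blockDown v := by
  unfold blockDown; split_ifs <;> linarith

lemma blockUp_mono {u v : ℝ} (h : u ≤ v) : blockUp u ≤ blockUp v := by
  unfold blockUp; split_ifs <;> linarith

lemma blockDown_nonneg {t : ℝ} (h : 0 ≤ t) : 0 ≤ blockDown t := by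
  unfold blockDown; split_ifs <;> linarith

lemma blockDown_le_two {t : ℝ} (h : t ≤ 2) : blockDown t ≤ 2 := by
  unfold blockDown; split_ifs <;> linarith

lemma blockUp_nonneg {t : ℝ} (h : 0 ≤ t) : 0 ≤ blockUp t := by
  unfold blockUp; split_ifs <;> linarith

lemma blockUp_le_two {t : ℝ} (h : t ≤ 2) : blockUp t ≤ 2 := by
  unfold blockUp; split_ifs <;> linarith

lemma floor_frac_bounds (u : ℝ) : 0 ≤ u - 4 * (⌊u / 4⌋ : ℝ) ∧ u - 4 * (⌊u / 4⌋ : ℝ) < 4 := by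
  constructor
  · have := Int.floor_le (u / 4); linarith
  · have := Int.lt_floor_add_one (u / 4); linarith

lemma gmidRel_bounds (u : ℝ) :
    4 * (⌊u / 4⌋ : ℝ) ≤ gmidRel u ∧ gmidRel u ≤ 4 * (⌊u / 4⌋ : ℝ) + 4 := by
  obtain ⟨h0, h4⟩ := floor_frac_bounds u
  unfold gmidRel
  split_ifs with h
  · have := blockDown_nonneg h0
    have := blockDown_le_two h
    constructor <;> linarith
  · have h2 : 0 ≤ u - 4 * (⌊u / 4⌋ : ℝ) - 2 := by linarith
    have := blockUp_nonneg h2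
    have := blockUp_le_two (show u - 4 * (⌊u / 4⌋ : ℝ) - 2 ≤ 2 by linarith)
    constructor <;> linarith

lemma gmidRel_nonneg {u : ℝ} (h : 0 ≤ u) : 0 ≤ gmidRel u := by
  have hf : (0 : ℤ) ≤ ⌊u / 4⌋ := Int.floor_nonneg.2 (by linarith)
  have := (gmidRel_bounds u).1
  have : (0:ℝ) ≤ (⌊u / 4⌋ : ℝ) := by exact_mod_cast hf
  linarith [(gmidRel_bounds u).1]

lemma gmidRel_le {m : ℕ} {u : ℝ} (h : u ≤ 4 * (m : ℝ)) : gmidRel u ≤ 4 * (m : ℝ) := by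
  have hf : ⌊u / 4⌋ ≤ (m : ℤ) := by
    have := Int.floor_le_floor (R := ℝ) (show u / 4 ≤ ((m:ℤ):ℝ) by push_cast; linarith)
    simpa using this
  rcases lt_or_eq_of_le hf with hlt | heq
  · have : (⌊u / 4⌋ : ℝ) + 1 ≤ (m : ℝ) := by exact_mod_cast hlt
    linarith [(gmidRel_bounds u).2]
  · -- then u = 4 * m
    have h1 : 4 * (m : ℝ) ≤ u := by
      have := Int.floor_le (u / 4)
      rw [heq] at this
      push_cast at this
      linarith
    have hu : u = 4 * (m : ℝ) := le_antisymm h h1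
    unfold gmidRel
    have hfl : ⌊u / 4⌋ = (m : ℤ) := heq
    rw [hfl, hu]
    push_cast
    simp only [sub_self]
    norm_num [blockDown]

lemma gmidRel_mono {u v : ℝ} (h : u ≤ v) : gmidRel u ≤ gmidRel v := by
  have hf : ⌊u / 4⌋ ≤ ⌊v / 4⌋ := Int.floor_le_floor (by linarith)
  rcases lt_or_eq_of_le hf with hlt | heq
  · have : (⌊u / 4⌋ : ℝ) + 1 ≤ (⌊v / 4⌋ : ℝ) := by exact_mod_cast hlt
    linarith [(gmidRel_bounds u).2, (gmidRel_bounds v).1]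
  · unfold gmidRel
    rw [← heq]
    obtain ⟨hu0, _⟩ := floor_frac_bounds u
    split_ifs with h1 h2 h2
    · linarith [blockDown_mono (show u - 4 * (⌊u / 4⌋:ℝ) ≤ v - 4 * (⌊u / 4⌋:ℝ) by linarith)]
    · have := blockDown_le_two h1
      have := blockUp_nonneg (show (0:ℝ) ≤ v - 4 * (⌊u / 4⌋:ℝ) - 2 by linarith)
      linarith
    · linarith
    · linarith [blockUp_mono (show u - 4 * (⌊u / 4⌋:ℝ) - 2 ≤ v - 4 * (⌊u / 4⌋:ℝ) - 2 by linarith)]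
set_option maxHeartbeats 2000000 in
lemma X0fun_mono (m l : ℕ) : Monotone (X0fun m l) := by
  intro u v h
  have H1 : xF 0 u ≤ xF 0 v := xF0_mono h
  have H2 : xF 0 u ≤ u + 1 := xF0_le u
  have H3 : gmidRel (u - 4 * (l:ℝ)) ≤ gmidRel (v - 4 * (l:ℝ)) := gmidRel_mono (by linarith)
  have H4 : blockDown (u - (4 * (l:ℝ) + 4 * m)) ≤ blockDown (v - (4 * (l:ℝ) + 4 * m)) :=
    blockDown_mono (by linarith)
  unfold X0fun
  split_ifs <;>
    first
      | linarith
      | linarith [gmidRel_nonneg (show (0:ℝ) ≤ v - 4 * (l:ℝ) by linarith)]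
      | linarith [gmidRel_le (m := m) (show u - 4 * (l:ℝ) ≤ 4 * (m:ℝ) by linarith)]
      | linarith [blockDown_nonneg (show (0:ℝ) ≤ v - (4 * (l:ℝ) + 4 * m) by linarith)]
      | linarith [blockDown_le_two (show u - (4 * (l:ℝ) + 4 * m) ≤ 2 by linarith)]
      | linarith [gmidRel_le (m := m) (show u - 4 * (l:ℝ) ≤ 4 * (m:ℝ) by linarith),
          blockDown_nonneg (show (0:ℝ) ≤ v - (4 * (l:ℝ) + 4 * m) by linarith)]

lemma X0_low {m l : ℕ} {t : ℝ} (h1 : 2 ≤ t) (h2 : t ≤ 4 * (l:ℝ) - 3/2) :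
    X0fun m l t = t + 1 := by
  have hm : (0:ℝ) ≤ (m:ℝ) := Nat.cast_nonneg m
  unfold X0fun xF; push_cast; split_ifs <;> linarith

lemma X0_ramp2 {m l : ℕ} {t : ℝ} (h1 : 4 * (l:ℝ) - 3/2 < t) (h2 : t ≤ 4 * (l:ℝ) - 1) :
    X0fun m l t = 4 * (l:ℝ) - 1/2 + (t - (4 * (l:ℝ) - 3/2)) / 2 := by
  have hm : (0:ℝ) ≤ (m:ℝ) := Nat.cast_nonneg m
  unfold X0fun; split_ifs <;> linarith

lemma X0_ramp3 {m l : ℕ} {t : ℝ} (h1 : 4 * (l:ℝ) - 1 < t) (h2 : t ≤ 4 * (l:ℝ)) :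
    X0fun m l t = 4 * (l:ℝ) - 1/4 + (t - (4 * (l:ℝ) - 1)) / 4 := by
  have hm : (0:ℝ) ≤ (m:ℝ) := Nat.cast_nonneg m
  unfold X0fun; split_ifs <;> linarith

lemma gmid_floor (k : ℕ) (r : ℝ) (h0 : 0 ≤ r) (h4 : r < 4) : ⌊(4 * (k:ℝ) + r) / 4⌋ = (k:ℤ) := by
  rw [Int.floor_eq_iff]
  push_cast
  constructor <;> linarith

lemma gmid_cell_down (k : ℕ) (r : ℝ) (h0 : 0 ≤ r) (h2 : r ≤ 2) :
    gmidRel (4 * (k:ℝ) + r) = 4 * (k:ℝ) + blockDown r := by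
  unfold gmidRel
  rw [gmid_floor k r h0 (by linarith)]
  push_cast
  rw [show 4 * (k:ℝ) + r - 4 * (k:ℝ) = r by ring]
  rw [if_pos h2]

lemma gmid_cell_up (k : ℕ) (r : ℝ) (h2 : 2 < r) (h4 : r < 4) :
    gmidRel (4 * (k:ℝ) + r) = 4 * (k:ℝ) + 2 + blockUp (r - 2) := by
  unfold gmidRel
  rw [gmid_floor k r (by linarith) h4]
  push_cast
  rw [show 4 * (k:ℝ) + r - 4 * (k:ℝ) = r by ring]
  rw [if_neg (by linarith)]

lemma X0_cellDown {m l : ℕ} (k : ℕ) {r : ℝ} (hk : k ≤ m) (h0 : 0 < r) (h2 : r ≤ 2) :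
    X0fun m l (4 * (l:ℝ) + 4 * k + r) = 4 * (l:ℝ) + 4 * k + blockDown r := by
  have hk0 : (0:ℝ) ≤ (k:ℝ) := Nat.cast_nonneg k
  rcases lt_or_eq_of_le hk with hlt | heq
  · have hkm : (k:ℝ) + 1 ≤ (m:ℝ) := by exact_mod_cast hlt
    unfold X0fun
    rw [if_neg (by linarith), if_neg (by linarith), if_neg (by linarith),
      if_pos (by linarith : 4 * (l:ℝ) + 4 * k + r ≤ 4 * (l:ℝ) + 4 * m)]
    rw [show 4 * (l:ℝ) + 4 * k + r - 4 * (l:ℝ) = 4 * (k:ℝ) + r by ring]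
    rw [gmid_cell_down k r (le_of_lt h0) h2]
    ring
  · subst heq
    unfold X0fun
    rw [if_neg (by linarith), if_neg (by linarith), if_neg (by linarith),
      if_neg (by push_cast; linarith), if_pos (by push_cast; linarith)]
    rw [show 4 * (l:ℝ) + 4 * (k:ℝ) + r - (4 * (l:ℝ) + 4 * (k:ℝ)) = r by ring]

lemma X0_cellUp {m l : ℕ} (k : ℕ) {r : ℝ} (hk : k < m) (h2 : 2 < r) (h4 : r < 4) :
    X0fun m l (4 * (l:ℝ) + 4 * k + r) = 4 * (l:ℝ) + 4 * k + 2 + blockUp (r - 2) := by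
  have hk0 : (0:ℝ) ≤ (k:ℝ) := Nat.cast_nonneg k
  have hkm : (k:ℝ) + 1 ≤ (m:ℝ) := by exact_mod_cast hk
  unfold X0fun
  rw [if_neg (by linarith), if_neg (by linarith), if_neg (by linarith),
    if_pos (by linarith : 4 * (l:ℝ) + 4 * k + r ≤ 4 * (l:ℝ) + 4 * m)]
  rw [show 4 * (l:ℝ) + 4 * k + r - 4 * (l:ℝ) = 4 * (k:ℝ) + r by ring]
  rw [gmid_cell_up k r h2 h4]
  ring

lemma X0_ramp6 {m l : ℕ} {t : ℝ} (h1 : 4 * (l:ℝ) + 4 * m + 2 < t)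
    (h2 : t ≤ 4 * (l:ℝ) + 4 * m + 9/4) :
    X0fun m l t = 4 * (l:ℝ) + 4 * m + 2 + 4 * (t - (4 * (l:ℝ) + 4 * m + 2)) := by
  have hm : (0:ℝ) ≤ (m:ℝ) := Nat.cast_nonneg m
  unfold X0fun; split_ifs <;> linarith

lemma X0_ramp7 {m l : ℕ} {t : ℝ} (h1 : 4 * (l:ℝ) + 4 * m + 9/4 < t)
    (h2 : t ≤ 4 * (l:ℝ) + 4 * m + 5/2) :
    X0fun m l t = 4 * (l:ℝ) + 4 * m + 3 + 2 * (t - (4 * (l:ℝ) + 4 * m + 9/4)) := by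
  have hm : (0:ℝ) ≤ (m:ℝ) := Nat.cast_nonneg m
  unfold X0fun; split_ifs <;> linarith

lemma X0_top {m l : ℕ} {t : ℝ} (h1 : 4 * (l:ℝ) + 4 * m + 5/2 < t) :
    X0fun m l t = t + 1 := by
  have hm : (0:ℝ) ≤ (m:ℝ) := Nat.cast_nonneg m
  unfold X0fun; split_ifs <;> linarith

noncomputable def PhiF (m l : ℕ) (s : ℝ) : ℝ :=
  X0fun m l (X0fun m l (X1fun m l (X1fun m l s)))

noncomputable def PsiF (m l : ℕ) (t : ℝ) : ℝ :=
  X1fun m l (X1fun m l (X0fun m l (X0fun m l t)))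

lemma X1run (m l : ℕ) (t : ℝ) : X1fun m l t = X0fun m l (t - 1) + 1 := rfl

lemma X0_top' {m l : ℕ} {t : ℝ} (h1 : 4 * (l:ℝ) + 4 * m + 5/2 ≤ t) :
    X0fun m l t = t + 1 := by
  rcases eq_or_lt_of_le h1 with h | h
  · rw [X0_ramp7 (by rw [← h]; norm_num) (le_of_eq h.symm)]
    rw [← h]; ring
  · exact X0_top h

section
variable {m l : ℕ}

lemma psi_low {t : ℝ} (h1 : 2 ≤ t) (h2 : t ≤ 4 * (l:ℝ) - 7/2) :
    PsiF m l (t) = t + 4 := by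
  unfold PsiF
  rw [X1run,
    X1run,
    X0_low (t := t) (by linarith) (by linarith),
    X0_low (t := t + 1) (by linarith) (by linarith),
    show t + 1 + 1 - 1 = t + 1 from by first | (norm_num [blockUp, blockDown]; try ring) | ring,
    X0_low (t := t + 1) (by linarith) (by linarith),
    show t + 1 + 1 + 1 - 1 = t + 2 from by first | (norm_num [blockUp, blockDown]; try ring) | ring,
    X0_low (t := t + 2) (by linarith) (by linarith)]
  try show t + 2 + 1 + 1 = t + 4
  try first | (norm_num [blockUp, blockDown]; try ring) | ring

lemma phi_low {t : ℝ} (h1 : 3 ≤ t) (h2 : t ≤ 4 * (l:ℝ) - 9/2) :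
    PhiF m l (t) = t + 4 := by
  unfold PhiF
  rw [X1run,
    X1run,
    X0_low (t := t - 1) (by linarith) (by linarith),
    show t - 1 + 1 + 1 - 1 = t from by first | (norm_num [blockUp, blockDown]; try ring) | ring,
    X0_low (t := t) (by linarith) (by linarith),
    show t + 1 + 1 = t + 2 from by first | (norm_num [blockUp, blockDown]; try ring) | ring,
    X0_low (t := t + 2) (by linarith) (by linarith),
    show t + 2 + 1 = t + 3 from by first | (norm_num [blockUp, blockDown]; try ring) | ring,
    X0_low (t := t + 3) (by linarith) (by linarith)]
  try show t + 3 + 1 = t + 4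
  try first | (norm_num [blockUp, blockDown]; try ring) | ring

lemma phi_rampA (hl : (2:ℝ) ≤ l) {t : ℝ} (h1 : 4 * (l:ℝ) - 9/2 < t) (h2 : t ≤ 4 * (l:ℝ) - 4) :
    PhiF m l (t) = 4 * (l:ℝ) - 1/2 + (t + 3 - (4 * (l:ℝ) - 3/2)) / 2 := by
  unfold PhiF
  rw [X1run,
    X1run,
    X0_low (t := t - 1) (by linarith) (by linarith),
    show t - 1 + 1 + 1 - 1 = t from by first | (norm_num [blockUp, blockDown]; try ring) | ring,
    X0_low (t := t) (by linarith) (by linarith),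
    show t + 1 + 1 = t + 2 from by first | (norm_num [blockUp, blockDown]; try ring) | ring,
    X0_low (t := t + 2) (by linarith) (by linarith),
    show t + 2 + 1 = t + 3 from by first | (norm_num [blockUp, blockDown]; try ring) | ring,
    X0_ramp2 (t := t + 3) (by linarith) (by linarith)]
  try show 4 * (l:ℝ) - 1 / 2 + (t + 3 - (4 * (l:ℝ) - 3 / 2)) / 2 = 4 * (l:ℝ) - 1/2 + (t + 3 - (4 * (l:ℝ) - 3/2)) / 2
  try first | (norm_num [blockUp, blockDown]; try ring) | ring

lemma phi_m2 (hl : (2:ℝ) ≤ l) :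
    PhiF m l (4 * (l:ℝ) - 2) = 4 * (l:ℝ) := by
  unfold PhiF
  rw [X1run,
    X1run,
    show 4 * (l:ℝ) - 2 - 1 = 4 * (l:ℝ) - 3 from by first | (norm_num [blockUp, blockDown]; try ring) | ring,
    X0_low (t := 4 * (l:ℝ) - 3) (by linarith) (by linarith),
    show 4 * (l:ℝ) - 3 + 1 + 1 - 1 = 4 * (l:ℝ) - 2 from by first | (norm_num [blockUp, blockDown]; try ring) | ring,
    X0_low (t := 4 * (l:ℝ) - 2) (by linarith) (by linarith),
    show 4 * (l:ℝ) - 2 + 1 + 1 = 4 * (l:ℝ) from by first | (norm_num [blockUp, blockDown]; try ring) | ring,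
    X0_ramp3 (t := 4 * (l:ℝ)) (by linarith) (by linarith),
    show 4 * (l:ℝ) - 1 / 4 + (4 * (l:ℝ) - (4 * (l:ℝ) - 1)) / 4 = 4 * (l:ℝ) from by first | (norm_num [blockUp, blockDown]; try ring) | ring,
    X0_ramp3 (t := 4 * (l:ℝ)) (by linarith) (by linarith)]
  try show 4 * (l:ℝ) - 1 / 4 + (4 * (l:ℝ) - (4 * (l:ℝ) - 1)) / 4 = 4 * (l:ℝ)
  try first | (norm_num [blockUp, blockDown]; try ring) | ring

lemma psi_m2 (hl : (2:ℝ) ≤ l) :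
    PsiF m l (4 * (l:ℝ) - 2) = 4 * (l:ℝ) + 29/32 := by
  unfold PsiF
  rw [X1run,
    X1run,
    X0_low (t := 4 * (l:ℝ) - 2) (by linarith) (by linarith),
    show 4 * (l:ℝ) - 2 + 1 = 4 * (l:ℝ) - 1 from by first | (norm_num [blockUp, blockDown]; try ring) | ring,
    X0_ramp2 (t := 4 * (l:ℝ) - 1) (by linarith) (by linarith),
    show 4 * (l:ℝ) - 1 / 2 + (4 * (l:ℝ) - 1 - (4 * (l:ℝ) - 3 / 2)) / 2 - 1 = 4 * (l:ℝ) - 5 / 4 from by first | (norm_num [blockUp, blockDown]; try ring) | ring,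
    X0_ramp2 (t := 4 * (l:ℝ) - 5 / 4) (by linarith) (by linarith),
    show 4 * (l:ℝ) - 1 / 2 + (4 * (l:ℝ) - 5 / 4 - (4 * (l:ℝ) - 3 / 2)) / 2 + 1 - 1 = 4 * (l:ℝ) - 3 / 8 from by first | (norm_num [blockUp, blockDown]; try ring) | ring,
    X0_ramp3 (t := 4 * (l:ℝ) - 3 / 8) (by linarith) (by linarith)]
  try show 4 * (l:ℝ) - 1 / 4 + (4 * (l:ℝ) - 3 / 8 - (4 * (l:ℝ) - 1)) / 4 + 1 = 4 * (l:ℝ) + 29/32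
  try first | (norm_num [blockUp, blockDown]; try ring) | ring

lemma phi_cell (j : ℕ) (hj : j ≤ m) :
    PhiF m l (4 * (l:ℝ) + 4 * (j:ℝ) + 133 / 64) = 4 * (l:ℝ) + 4 * (j:ℝ) + 293 / 4096 := by
  unfold PhiF
  rw [X1run,
    X1run,
    show 4 * (l:ℝ) + 4 * (j:ℝ) + 133 / 64 - 1 = 4 * (l:ℝ) + 4 * (j:ℝ) + 69 / 64 from by first | (norm_num [blockUp, blockDown]; try ring) | ring,
    X0_cellDown j hj (by norm_num) (by norm_num),
    show 4 * (l:ℝ) + 4 * (j:ℝ) + blockDown (69 / 64) + 1 - 1 = 4 * (l:ℝ) + 4 * (j:ℝ) + 37 / 128 from by first | (norm_num [blockUp, blockDown]; try ring) | ring,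
    X0_cellDown j hj (by norm_num) (by norm_num),
    show 4 * (l:ℝ) + 4 * (j:ℝ) + blockDown (37 / 128) + 1 = 4 * (l:ℝ) + 4 * (j:ℝ) + 549 / 512 from by first | (norm_num [blockUp, blockDown]; try ring) | ring,
    X0_cellDown j hj (by norm_num) (by norm_num),
    show 4 * (l:ℝ) + 4 * (j:ℝ) + blockDown (549 / 512) = 4 * (l:ℝ) + 4 * (j:ℝ) + 293 / 1024 from by first | (norm_num [blockUp, blockDown]; try ring) | ring,
    X0_cellDown j hj (by norm_num) (by norm_num)]
  try show 4 * (l:ℝ) + 4 * (j:ℝ) + blockDown (293 / 1024) = 4 * (l:ℝ) + 4 * (j:ℝ) + 293 / 4096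
  try first | (norm_num [blockUp, blockDown]; try ring) | ring

lemma psi_cellA (k : ℕ) (hk : k < m) :
    PsiF m l (4 * (l:ℝ) + 4 * (k:ℝ) + 133 / 64) = 4 * (l:ℝ) + 4 * (k:ℝ) + 9 / 2 := by
  unfold PsiF
  rw [X1run,
    X1run,
    X0_cellUp k hk (by norm_num) (by norm_num),
    show 4 * (l:ℝ) + 4 * (k:ℝ) + 2 + blockUp (133 / 64 - 2) = 4 * (l:ℝ) + 4 * (k:ℝ) + 37 / 16 from by first | (norm_num [blockUp, blockDown]; try ring) | ring,
    X0_cellUp k hk (by norm_num) (by norm_num),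
    show 4 * (l:ℝ) + 4 * (k:ℝ) + 2 + blockUp (37 / 16 - 2) - 1 = 4 * (l:ℝ) + 4 * (k:ℝ) + 17 / 8 from by first | (norm_num [blockUp, blockDown]; try ring) | ring,
    X0_cellUp k hk (by norm_num) (by norm_num),
    show 4 * (l:ℝ) + 4 * (k:ℝ) + 2 + blockUp (17 / 8 - 2) + 1 - 1 = 4 * (l:ℝ) + 4 * (k:ℝ) + 5 / 2 from by first | (norm_num [blockUp, blockDown]; try ring) | ring,
    X0_cellUp k hk (by norm_num) (by norm_num)]
  try show 4 * (l:ℝ) + 4 * (k:ℝ) + 2 + blockUp (5 / 2 - 2) + 1 = 4 * (l:ℝ) + 4 * (k:ℝ) + 9 / 2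
  try first | (norm_num [blockUp, blockDown]; try ring) | ring

lemma phi_topramp  :
    PhiF m l (4 * (l:ℝ) + 4 * (m:ℝ) + 67 / 32) = 4 * (l:ℝ) + 4 * (m:ℝ) + 147 / 2048 := by
  unfold PhiF
  rw [X1run,
    X1run,
    show 4 * (l:ℝ) + 4 * (m:ℝ) + 67 / 32 - 1 = 4 * (l:ℝ) + 4 * (m:ℝ) + 35 / 32 from by first | (norm_num [blockUp, blockDown]; try ring) | ring,
    X0_cellDown m le_rfl (by norm_num) (by norm_num),
    show 4 * (l:ℝ) + 4 * (m:ℝ) + blockDown (35 / 32) + 1 - 1 = 4 * (l:ℝ) + 4 * (m:ℝ) + 19 / 64 from by first | (norm_num [blockUp, blockDown]; try ring) | ring,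
    X0_cellDown m le_rfl (by norm_num) (by norm_num),
    show 4 * (l:ℝ) + 4 * (m:ℝ) + blockDown (19 / 64) + 1 = 4 * (l:ℝ) + 4 * (m:ℝ) + 275 / 256 from by first | (norm_num [blockUp, blockDown]; try ring) | ring,
    X0_cellDown m le_rfl (by norm_num) (by norm_num),
    show 4 * (l:ℝ) + 4 * (m:ℝ) + blockDown (275 / 256) = 4 * (l:ℝ) + 4 * (m:ℝ) + 147 / 512 from by first | (norm_num [blockUp, blockDown]; try ring) | ring,
    X0_cellDown m le_rfl (by norm_num) (by norm_num)]
  try show 4 * (l:ℝ) + 4 * (m:ℝ) + blockDown (147 / 512) = 4 * (l:ℝ) + 4 * (m:ℝ) + 147 / 2048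
  try first | (norm_num [blockUp, blockDown]; try ring) | ring

lemma psi_topramp  :
    PsiF m l (4 * (l:ℝ) + 4 * (m:ℝ) + 67 / 32) = 4 * (l:ℝ) + 4 * (m:ℝ) + 5 := by
  unfold PsiF
  rw [X1run,
    X1run,
    X0_ramp6 (t := 4 * (l:ℝ) + 4 * (m:ℝ) + 67 / 32) (by linarith) (by linarith),
    show 4 * (l:ℝ) + 4 * (m:ℝ) + 2 + 4 * (4 * (l:ℝ) + 4 * (m:ℝ) + 67 / 32 - (4 * (l:ℝ) + 4 * (m:ℝ) + 2)) = 4 * (l:ℝ) + 4 * (m:ℝ) + 19 / 8 from by first | (norm_num [blockUp, blockDown]; try ring) | ring,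
    X0_ramp7 (t := 4 * (l:ℝ) + 4 * (m:ℝ) + 19 / 8) (by linarith) (by linarith),
    show 4 * (l:ℝ) + 4 * (m:ℝ) + 3 + 2 * (4 * (l:ℝ) + 4 * (m:ℝ) + 19 / 8 - (4 * (l:ℝ) + 4 * (m:ℝ) + 9 / 4)) - 1 = 4 * (l:ℝ) + 4 * (m:ℝ) + 9 / 4 from by first | (norm_num [blockUp, blockDown]; try ring) | ring,
    X0_ramp6 (t := 4 * (l:ℝ) + 4 * (m:ℝ) + 9 / 4) (by linarith) (by linarith),
    show 4 * (l:ℝ) + 4 * (m:ℝ) + 2 + 4 * (4 * (l:ℝ) + 4 * (m:ℝ) + 9 / 4 - (4 * (l:ℝ) + 4 * (m:ℝ) + 2)) + 1 - 1 = 4 * (l:ℝ) + 4 * (m:ℝ) + 3 from by first | (norm_num [blockUp, blockDown]; try ring) | ring,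
    X0_top' (t := 4 * (l:ℝ) + 4 * (m:ℝ) + 3) (by linarith)]
  try show 4 * (l:ℝ) + 4 * (m:ℝ) + 3 + 1 + 1 = 4 * (l:ℝ) + 4 * (m:ℝ) + 5
  try first | (norm_num [blockUp, blockDown]; try ring) | ring

lemma phi_toppt  :
    PhiF m l (4 * (l:ℝ) + 4 * (m:ℝ) + 3) = 4 * (l:ℝ) + 4 * (m:ℝ) + 5 := by
  unfold PhiF
  rw [X1run,
    X1run,
    show 4 * (l:ℝ) + 4 * (m:ℝ) + 3 - 1 = 4 * (l:ℝ) + 4 * (m:ℝ) + 2 from by first | (norm_num [blockUp, blockDown]; try ring) | ring,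
    X0_cellDown m le_rfl (by norm_num) (by norm_num),
    show 4 * (l:ℝ) + 4 * (m:ℝ) + blockDown (2) + 1 - 1 = 4 * (l:ℝ) + 4 * (m:ℝ) + 2 from by first | (norm_num [blockUp, blockDown]; try ring) | ring,
    X0_cellDown m le_rfl (by norm_num) (by norm_num),
    show 4 * (l:ℝ) + 4 * (m:ℝ) + blockDown (2) + 1 = 4 * (l:ℝ) + 4 * (m:ℝ) + 3 from by first | (norm_num [blockUp, blockDown]; try ring) | ring,
    X0_top' (t := 4 * (l:ℝ) + 4 * (m:ℝ) + 3) (by linarith),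
    X0_top' (t := 4 * (l:ℝ) + 4 * (m:ℝ) + 3 + 1) (by linarith)]
  try show 4 * (l:ℝ) + 4 * (m:ℝ) + 3 + 1 + 1 = 4 * (l:ℝ) + 4 * (m:ℝ) + 5
  try first | (norm_num [blockUp, blockDown]; try ring) | ring

lemma psi_top {t : ℝ} (h : 4 * (l:ℝ) + 4 * (m:ℝ) + 5/2 < t) :
    PsiF m l (t) = t + 4 := by
  unfold PsiF
  rw [X1run,
    X1run,
    X0_top' (t := t) (by linarith),
    X0_top' (t := t + 1) (by linarith),
    show t + 1 + 1 - 1 = t + 1 from by first | (norm_num [blockUp, blockDown]; try ring) | ring,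
    X0_top' (t := t + 1) (by linarith),
    show t + 1 + 1 + 1 - 1 = t + 2 from by first | (norm_num [blockUp, blockDown]; try ring) | ring,
    X0_top' (t := t + 2) (by linarith)]
  try show t + 2 + 1 + 1 = t + 4
  try first | (norm_num [blockUp, blockDown]; try ring) | ring

lemma phi_top {t : ℝ} (h : 4 * (l:ℝ) + 4 * (m:ℝ) + 7/2 ≤ t) :
    PhiF m l (t) = t + 4 := by
  unfold PhiF
  rw [X1run,
    X1run,
    X0_top' (t := t - 1) (by linarith),
    show t - 1 + 1 + 1 - 1 = t from by first | (norm_num [blockUp, blockDown]; try ring) | ring,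
    X0_top' (t := t) (by linarith),
    show t + 1 + 1 = t + 2 from by first | (norm_num [blockUp, blockDown]; try ring) | ring,
    X0_top' (t := t + 2) (by linarith),
    X0_top' (t := t + 2 + 1) (by linarith)]
  try show t + 2 + 1 + 1 = t + 4
  try first | (norm_num [blockUp, blockDown]; try ring) | ring

lemma phi_esc (j : ℕ) (hj : j ≤ m) :
    PhiF m l (4 * (l:ℝ) + 4 * (j:ℝ) + 187 / 64) = 4 * (l:ℝ) + 4 * (j:ℝ) + 1 / 2 := by
  unfold PhiF
  rw [X1run,
    X1run,
    show 4 * (l:ℝ) + 4 * (j:ℝ) + 187 / 64 - 1 = 4 * (l:ℝ) + 4 * (j:ℝ) + 123 / 64 from by first | (norm_num [blockUp, blockDown]; try ring) | ring,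
    X0_cellDown j hj (by norm_num) (by norm_num),
    show 4 * (l:ℝ) + 4 * (j:ℝ) + blockDown (123 / 64) + 1 - 1 = 4 * (l:ℝ) + 4 * (j:ℝ) + 27 / 16 from by first | (norm_num [blockUp, blockDown]; try ring) | ring,
    X0_cellDown j hj (by norm_num) (by norm_num),
    show 4 * (l:ℝ) + 4 * (j:ℝ) + blockDown (27 / 16) + 1 = 4 * (l:ℝ) + 4 * (j:ℝ) + 15 / 8 from by first | (norm_num [blockUp, blockDown]; try ring) | ring,
    X0_cellDown j hj (by norm_num) (by norm_num),
    show 4 * (l:ℝ) + 4 * (j:ℝ) + blockDown (15 / 8) = 4 * (l:ℝ) + 4 * (j:ℝ) + 3 / 2 from by first | (norm_num [blockUp, blockDown]; try ring) | ring,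
    X0_cellDown j hj (by norm_num) (by norm_num)]
  try show 4 * (l:ℝ) + 4 * (j:ℝ) + blockDown (3 / 2) = 4 * (l:ℝ) + 4 * (j:ℝ) + 1 / 2
  try first | (norm_num [blockUp, blockDown]; try ring) | ring

lemma psi_esc0 (hl : (2:ℝ) ≤ l) :
    PsiF m l (4 * (l:ℝ) - 7 / 2) = 4 * (l:ℝ) + 1 / 2 := by
  unfold PsiF
  rw [X1run,
    X1run,
    X0_low (t := 4 * (l:ℝ) - 7 / 2) (by linarith) (by linarith),
    show 4 * (l:ℝ) - 7 / 2 + 1 = 4 * (l:ℝ) - 5 / 2 from by first | (norm_num [blockUp, blockDown]; try ring) | ring,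
    X0_low (t := 4 * (l:ℝ) - 5 / 2) (by linarith) (by linarith),
    show 4 * (l:ℝ) - 5 / 2 + 1 - 1 = 4 * (l:ℝ) - 5 / 2 from by first | (norm_num [blockUp, blockDown]; try ring) | ring,
    X0_low (t := 4 * (l:ℝ) - 5 / 2) (by linarith) (by linarith),
    show 4 * (l:ℝ) - 5 / 2 + 1 + 1 - 1 = 4 * (l:ℝ) - 3 / 2 from by first | (norm_num [blockUp, blockDown]; try ring) | ring,
    X0_low (t := 4 * (l:ℝ) - 3 / 2) (by linarith) (by linarith)]
  try show 4 * (l:ℝ) - 3 / 2 + 1 + 1 = 4 * (l:ℝ) + 1 / 2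
  try first | (norm_num [blockUp, blockDown]; try ring) | ring

lemma psi_escK (k : ℕ) (hk : k < m) :
    PsiF m l (4 * (l:ℝ) + 4 * (k:ℝ) + 187 / 64) = 4 * (l:ℝ) + 4 * (k:ℝ) + 20187 / 4096 := by
  unfold PsiF
  rw [X1run,
    X1run,
    X0_cellUp k hk (by norm_num) (by norm_num),
    show 4 * (l:ℝ) + 4 * (k:ℝ) + 2 + blockUp (187 / 64 - 2) = 4 * (l:ℝ) + 4 * (k:ℝ) + 475 / 128 from by first | (norm_num [blockUp, blockDown]; try ring) | ring,
    X0_cellUp k hk (by norm_num) (by norm_num),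
    show 4 * (l:ℝ) + 4 * (k:ℝ) + 2 + blockUp (475 / 128 - 2) - 1 = 4 * (l:ℝ) + 4 * (k:ℝ) + 1499 / 512 from by first | (norm_num [blockUp, blockDown]; try ring) | ring,
    X0_cellUp k hk (by norm_num) (by norm_num),
    show 4 * (l:ℝ) + 4 * (k:ℝ) + 2 + blockUp (1499 / 512 - 2) + 1 - 1 = 4 * (l:ℝ) + 4 * (k:ℝ) + 3803 / 1024 from by first | (norm_num [blockUp, blockDown]; try ring) | ring,
    X0_cellUp k hk (by norm_num) (by norm_num)]
  try show 4 * (l:ℝ) + 4 * (k:ℝ) + 2 + blockUp (3803 / 1024 - 2) + 1 = 4 * (l:ℝ) + 4 * (k:ℝ) + 20187 / 4096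
  try first | (norm_num [blockUp, blockDown]; try ring) | ring

lemma psi_esctop  :
    PsiF m l (4 * (l:ℝ) + 4 * (m:ℝ) + 187 / 64) = 4 * (l:ℝ) + 4 * (m:ℝ) + 443 / 64 := by
  unfold PsiF
  rw [X1run,
    X1run,
    X0_top' (t := 4 * (l:ℝ) + 4 * (m:ℝ) + 187 / 64) (by linarith),
    X0_top' (t := 4 * (l:ℝ) + 4 * (m:ℝ) + 187 / 64 + 1) (by linarith),
    show 4 * (l:ℝ) + 4 * (m:ℝ) + 187 / 64 + 1 + 1 - 1 = 4 * (l:ℝ) + 4 * (m:ℝ) + 251 / 64 from by first | (norm_num [blockUp, blockDown]; try ring) | ring,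
    X0_top' (t := 4 * (l:ℝ) + 4 * (m:ℝ) + 251 / 64) (by linarith),
    show 4 * (l:ℝ) + 4 * (m:ℝ) + 251 / 64 + 1 + 1 - 1 = 4 * (l:ℝ) + 4 * (m:ℝ) + 315 / 64 from by first | (norm_num [blockUp, blockDown]; try ring) | ring,
    X0_top' (t := 4 * (l:ℝ) + 4 * (m:ℝ) + 315 / 64) (by linarith)]
  try show 4 * (l:ℝ) + 4 * (m:ℝ) + 315 / 64 + 1 + 1 = 4 * (l:ℝ) + 4 * (m:ℝ) + 443 / 64
  try first | (norm_num [blockUp, blockDown]; try ring) | ring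

lemma phi_esctop  :
    PhiF m l (4 * (l:ℝ) + 4 * (m:ℝ) + 827 / 256) = 4 * (l:ℝ) + 4 * (m:ℝ) + 443 / 64 := by
  unfold PhiF
  rw [X1run,
    X1run,
    show 4 * (l:ℝ) + 4 * (m:ℝ) + 827 / 256 - 1 = 4 * (l:ℝ) + 4 * (m:ℝ) + 571 / 256 from by first | (norm_num [blockUp, blockDown]; try ring) | ring,
    X0_ramp6 (t := 4 * (l:ℝ) + 4 * (m:ℝ) + 571 / 256) (by linarith) (by linarith),
    show 4 * (l:ℝ) + 4 * (m:ℝ) + 2 + 4 * (4 * (l:ℝ) + 4 * (m:ℝ) + 571 / 256 - (4 * (l:ℝ) + 4 * (m:ℝ) + 2)) + 1 - 1 = 4 * (l:ℝ) + 4 * (m:ℝ) + 187 / 64 from by first | (norm_num [blockUp, blockDown]; try ring) | ring,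
    X0_top' (t := 4 * (l:ℝ) + 4 * (m:ℝ) + 187 / 64) (by linarith),
    show 4 * (l:ℝ) + 4 * (m:ℝ) + 187 / 64 + 1 + 1 = 4 * (l:ℝ) + 4 * (m:ℝ) + 315 / 64 from by first | (norm_num [blockUp, blockDown]; try ring) | ring,
    X0_top' (t := 4 * (l:ℝ) + 4 * (m:ℝ) + 315 / 64) (by linarith),
    X0_top' (t := 4 * (l:ℝ) + 4 * (m:ℝ) + 315 / 64 + 1) (by linarith)]
  try show 4 * (l:ℝ) + 4 * (m:ℝ) + 315 / 64 + 1 + 1 = 4 * (l:ℝ) + 4 * (m:ℝ) + 443 / 64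
  try first | (norm_num [blockUp, blockDown]; try ring) | ring

lemma phi_tA1 {d : ℝ} (h0 : 0 < d) (h1 : d ≤ 1/16) :
    PhiF m l (4 * (l:ℝ) + 4 * (m:ℝ) + 3 + d) = 4 * (l:ℝ) + 4 * (m:ℝ) + 5 + 16 * d := by
  unfold PhiF
  rw [X1run,
    X1run,
    show 4 * (l:ℝ) + 4 * (m:ℝ) + 3 + d - 1 = 4 * (l:ℝ) + 4 * (m:ℝ) + 2 + d from by first | (norm_num [blockUp, blockDown]; try ring) | ring,
    X0_ramp6 (t := 4 * (l:ℝ) + 4 * (m:ℝ) + 2 + d) (by linarith) (by linarith),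
    show 4 * (l:ℝ) + 4 * (m:ℝ) + 2 + 4 * (4 * (l:ℝ) + 4 * (m:ℝ) + 2 + d - (4 * (l:ℝ) + 4 * (m:ℝ) + 2)) + 1 - 1 = 4 * (l:ℝ) + 4 * (m:ℝ) + 2 + 4 * d from by first | (norm_num [blockUp, blockDown]; try ring) | ring,
    X0_ramp6 (t := 4 * (l:ℝ) + 4 * (m:ℝ) + 2 + 4 * d) (by linarith) (by linarith),
    show 4 * (l:ℝ) + 4 * (m:ℝ) + 2 + 4 * (4 * (l:ℝ) + 4 * (m:ℝ) + 2 + 4 * d - (4 * (l:ℝ) + 4 * (m:ℝ) + 2)) + 1 = 4 * (l:ℝ) + 4 * (m:ℝ) + 3 + 16 * d from by first | (norm_num [blockUp, blockDown]; try ring) | ring,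
    X0_top' (t := 4 * (l:ℝ) + 4 * (m:ℝ) + 3 + 16 * d) (by linarith),
    X0_top' (t := 4 * (l:ℝ) + 4 * (m:ℝ) + 3 + 16 * d + 1) (by linarith)]
  try show 4 * (l:ℝ) + 4 * (m:ℝ) + 3 + 16 * d + 1 + 1 = 4 * (l:ℝ) + 4 * (m:ℝ) + 5 + 16 * d
  try first | (norm_num [blockUp, blockDown]; try ring) | ring

lemma phi_tA2 {d : ℝ} (h0 : 1/16 < d) (h1 : d ≤ 1/8) :
    PhiF m l (4 * (l:ℝ) + 4 * (m:ℝ) + 3 + d) = 4 * (l:ℝ) + 4 * (m:ℝ) + 11 / 2 + 8 * d := by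
  unfold PhiF
  rw [X1run,
    X1run,
    show 4 * (l:ℝ) + 4 * (m:ℝ) + 3 + d - 1 = 4 * (l:ℝ) + 4 * (m:ℝ) + 2 + d from by first | (norm_num [blockUp, blockDown]; try ring) | ring,
    X0_ramp6 (t := 4 * (l:ℝ) + 4 * (m:ℝ) + 2 + d) (by linarith) (by linarith),
    show 4 * (l:ℝ) + 4 * (m:ℝ) + 2 + 4 * (4 * (l:ℝ) + 4 * (m:ℝ) + 2 + d - (4 * (l:ℝ) + 4 * (m:ℝ) + 2)) + 1 - 1 = 4 * (l:ℝ) + 4 * (m:ℝ) + 2 + 4 * d from by first | (norm_num [blockUp, blockDown]; try ring) | ring,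
    X0_ramp7 (t := 4 * (l:ℝ) + 4 * (m:ℝ) + 2 + 4 * d) (by linarith) (by linarith),
    show 4 * (l:ℝ) + 4 * (m:ℝ) + 3 + 2 * (4 * (l:ℝ) + 4 * (m:ℝ) + 2 + 4 * d - (4 * (l:ℝ) + 4 * (m:ℝ) + 9 / 4)) + 1 = 4 * (l:ℝ) + 4 * (m:ℝ) + 7 / 2 + 8 * d from by first | (norm_num [blockUp, blockDown]; try ring) | ring,
    X0_top' (t := 4 * (l:ℝ) + 4 * (m:ℝ) + 7 / 2 + 8 * d) (by linarith),
    X0_top' (t := 4 * (l:ℝ) + 4 * (m:ℝ) + 7 / 2 + 8 * d + 1) (by linarith)]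
  try show 4 * (l:ℝ) + 4 * (m:ℝ) + 7 / 2 + 8 * d + 1 + 1 = 4 * (l:ℝ) + 4 * (m:ℝ) + 11 / 2 + 8 * d
  try first | (norm_num [blockUp, blockDown]; try ring) | ring

lemma phi_tA3 {d : ℝ} (h0 : 1/8 < d) (h1 : d ≤ 1/4) :
    PhiF m l (4 * (l:ℝ) + 4 * (m:ℝ) + 3 + d) = 4 * (l:ℝ) + 4 * (m:ℝ) + 6 + 4 * d := by
  unfold PhiF
  rw [X1run,
    X1run,
    show 4 * (l:ℝ) + 4 * (m:ℝ) + 3 + d - 1 = 4 * (l:ℝ) + 4 * (m:ℝ) + 2 + d from by first | (norm_num [blockUp, blockDown]; try ring) | ring,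
    X0_ramp6 (t := 4 * (l:ℝ) + 4 * (m:ℝ) + 2 + d) (by linarith) (by linarith),
    show 4 * (l:ℝ) + 4 * (m:ℝ) + 2 + 4 * (4 * (l:ℝ) + 4 * (m:ℝ) + 2 + d - (4 * (l:ℝ) + 4 * (m:ℝ) + 2)) + 1 - 1 = 4 * (l:ℝ) + 4 * (m:ℝ) + 2 + 4 * d from by first | (norm_num [blockUp, blockDown]; try ring) | ring,
    X0_top' (t := 4 * (l:ℝ) + 4 * (m:ℝ) + 2 + 4 * d) (by linarith),
    show 4 * (l:ℝ) + 4 * (m:ℝ) + 2 + 4 * d + 1 + 1 = 4 * (l:ℝ) + 4 * (m:ℝ) + 4 + 4 * d from by first | (norm_num [blockUp, blockDown]; try ring) | ring,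
    X0_top' (t := 4 * (l:ℝ) + 4 * (m:ℝ) + 4 + 4 * d) (by linarith),
    X0_top' (t := 4 * (l:ℝ) + 4 * (m:ℝ) + 4 + 4 * d + 1) (by linarith)]
  try show 4 * (l:ℝ) + 4 * (m:ℝ) + 4 + 4 * d + 1 + 1 = 4 * (l:ℝ) + 4 * (m:ℝ) + 6 + 4 * d
  try first | (norm_num [blockUp, blockDown]; try ring) | ring

lemma phi_tB {e : ℝ} (h0 : 0 < e) (h1 : e < 1/4) :
    PhiF m l (4 * (l:ℝ) + 4 * (m:ℝ) + 13 / 4 + e) = 4 * (l:ℝ) + 4 * (m:ℝ) + 7 + 2 * e := by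
  unfold PhiF
  rw [X1run,
    X1run,
    show 4 * (l:ℝ) + 4 * (m:ℝ) + 13 / 4 + e - 1 = 4 * (l:ℝ) + 4 * (m:ℝ) + 9 / 4 + e from by first | (norm_num [blockUp, blockDown]; try ring) | ring,
    X0_ramp7 (t := 4 * (l:ℝ) + 4 * (m:ℝ) + 9 / 4 + e) (by linarith) (by linarith),
    show 4 * (l:ℝ) + 4 * (m:ℝ) + 3 + 2 * (4 * (l:ℝ) + 4 * (m:ℝ) + 9 / 4 + e - (4 * (l:ℝ) + 4 * (m:ℝ) + 9 / 4)) + 1 - 1 = 4 * (l:ℝ) + 4 * (m:ℝ) + 3 + 2 * e from by first | (norm_num [blockUp, blockDown]; try ring) | ring,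
    X0_top' (t := 4 * (l:ℝ) + 4 * (m:ℝ) + 3 + 2 * e) (by linarith),
    show 4 * (l:ℝ) + 4 * (m:ℝ) + 3 + 2 * e + 1 + 1 = 4 * (l:ℝ) + 4 * (m:ℝ) + 5 + 2 * e from by first | (norm_num [blockUp, blockDown]; try ring) | ring,
    X0_top' (t := 4 * (l:ℝ) + 4 * (m:ℝ) + 5 + 2 * e) (by linarith),
    X0_top' (t := 4 * (l:ℝ) + 4 * (m:ℝ) + 5 + 2 * e + 1) (by linarith)]
  try show 4 * (l:ℝ) + 4 * (m:ℝ) + 5 + 2 * e + 1 + 1 = 4 * (l:ℝ) + 4 * (m:ℝ) + 7 + 2 * e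
  try first | (norm_num [blockUp, blockDown]; try ring) | ring

end

set_option maxHeartbeats 1000000 in
/-- For all sufficiently large multiples `b = 4l` of `4` and all `m ≥ 1`, the support of
`C = X_0² X_1² X_0⁻² X_1⁻²` inside `(b−5, ∞)` is exactly the open interval
`(b − 9/2, b + 4m + 7/2)`, and every `η` with `b − 7/2 ≤ η < b + 4m + 7/2` satisfies
`η·C^{m+2} > b + 4m + 3 + 3/16`. -/
theorem C_support_and_escape :
    ∃ N : ℕ, ∀ m l : ℕ, 1 ≤ m → N ≤ l → ∀ X0i X1i : ℝ → ℝ,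
      Function.LeftInverse X0i (X0fun m l) → Function.RightInverse X0i (X0fun m l) →
      Function.LeftInverse X1i (X1fun m l) → Function.RightInverse X1i (X1fun m l) →
      ({t : ℝ | 4 * (l : ℝ) - 5 < t ∧ Cfun m l X0i X1i t ≠ t} =
        Set.Ioo (4 * (l : ℝ) - 9 / 2) (4 * (l : ℝ) + 4 * m + 7 / 2)) ∧
      ∀ η : ℝ, 4 * (l : ℝ) - 7 / 2 ≤ η → η < 4 * (l : ℝ) + 4 * m + 7 / 2 →
        4 * (l : ℝ) + 4 * m + 3 + 3 / 16 < (Cfun m l X0i X1i)^[m + 2] η := by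
  refine ⟨2, ?_⟩
  intro m l hm hl X0i X1i h0L h0R h1L h1R
  obtain ⟨M', hM1⟩ : ∃ M', m = M' + 1 := ⟨m - 1, by omega⟩
  have hMr : (M':ℝ) = (m:ℝ) - 1 := by rw [hM1]; push_cast; ring
  have hlr : (2:ℝ) ≤ (l:ℝ) := by exact_mod_cast hl
  have hmr : (1:ℝ) ≤ (m:ℝ) := by exact_mod_cast hm
  have hX0id : ∀ x, X0fun m l (X0i x) = x := h0R
  have hX1id : ∀ x, X1fun m l (X1i x) = x := h1R
  have hPhiC : ∀ t, PhiF m l (Cfun m l X0i X1i t) = PsiF m l t := by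
    intro t
    simp only [Cfun, PhiF, PsiF, hX1id, hX0id]
  have hX0strict : StrictMono (X0fun m l) :=
    (X0fun_mono m l).strictMono_of_injective h0L.injective
  have hX1mono : Monotone (X1fun m l) := by
    intro a b hab
    simp only [X1fun]
    have := X0fun_mono m l (sub_le_sub_right hab 1)
    linarith
  have hX1strict : StrictMono (X1fun m l) :=
    hX1mono.strictMono_of_injective h1L.injective
  have hPhiStrict : StrictMono (PhiF m l) := by
    intro a b hab
    exact hX0strict (hX0strict (hX1strict (hX1strict hab)))
  have hPsiStrict : StrictMono (PsiF m l) := by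
    intro a b hab
    exact hX1strict (hX1strict (hX0strict (hX0strict hab)))
  have hCeq : ∀ t, (Cfun m l X0i X1i t = t ↔ PsiF m l t = PhiF m l t) := by
    intro t
    constructor
    · intro h
      rw [← hPhiC t, h]
    · intro h
      have h2 := hPhiC t
      rw [h] at h2
      exact hPhiStrict.injective h2
  have hCle : ∀ t s : ℝ, s ≤ Cfun m l X0i X1i t ↔ PhiF m l s ≤ PsiF m l t := by
    intro t s
    rw [← hPhiC t]
    exact hPhiStrict.le_iff_le.symm
  have hCmono : Monotone (Cfun m l X0i X1i) := by
    intro a b hab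
    have h1 : PhiF m l (Cfun m l X0i X1i a) ≤ PhiF m l (Cfun m l X0i X1i b) := by
      rw [hPhiC a, hPhiC b]
      exact hPsiStrict.monotone hab
    exact hPhiStrict.le_iff_le.mp h1
  constructor
  · -- support
    ext t
    simp only [Set.mem_setOf_eq, Set.mem_Ioo]
    constructor
    · rintro ⟨h5, hne⟩
      constructor
      · by_contra hc
        push_neg at hc
        exact hne ((hCeq t).mpr (by
          rw [psi_low (by linarith) (by linarith), phi_low (by linarith) (by linarith)]))
      · by_contra hc
        push_neg at hc
        exact hne ((hCeq t).mpr (by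
          rw [psi_top (by linarith), phi_top (by linarith)]))
    · rintro ⟨hlo, hhi⟩
      refine ⟨by linarith, ?_⟩
      suffices hK : PhiF m l t < PsiF m l t by
        intro hEq
        have h2 := (hCeq t).mp hEq
        linarith
      have step : ∀ a a' : ℝ, a < t → t ≤ a' → PhiF m l a' ≤ PsiF m l a →
          PhiF m l t < PsiF m l t := by
        intro a a' ha ha' hcmp
        exact lt_of_le_of_lt (le_trans (hPhiStrict.monotone ha') hcmp) (hPsiStrict ha)
      rcases le_or_gt t (4 * (l:ℝ) - 4) with hA | hA
      · rw [psi_low (by linarith) (by linarith), phi_rampA hlr (by linarith) (by linarith)]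
        linarith
      rcases le_or_gt t (4 * (l:ℝ) - 2) with hB | hB
      · refine step (4 * (l:ℝ) - 4) (4 * (l:ℝ) - 2) hA hB ?_
        rw [phi_m2 hlr, psi_low (by linarith) (by linarith)]
        linarith
      rcases le_or_gt t (4 * (l:ℝ) + 4 * ((0:ℕ):ℝ) + 133 / 64) with hC | hC
      · refine step (4 * (l:ℝ) - 2) _ hB hC ?_
        rw [phi_cell 0 (by omega), psi_m2 hlr]
        push_cast
        linarith
      rcases le_or_gt t (4 * (l:ℝ) + 4 * (M':ℝ) + 133 / 64) with hD | hD
      · -- middle blocks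
        set c : ℤ := ⌈(t - (4 * (l:ℝ) + 133 / 64)) / 4⌉ with hcdef
        have hc1 : 1 ≤ c := by
          have h0 : (0:ℝ) < (t - (4 * (l:ℝ) + 133 / 64)) / 4 := by push_cast at hC; linarith
          have := Int.ceil_pos.mpr h0
          omega
        have hc2 : c ≤ (M' : ℤ) := Int.ceil_le.mpr (by push_cast; linarith [hMr])
        obtain ⟨k, hk⟩ : ∃ k : ℕ, (k : ℤ) = c - 1 := ⟨(c - 1).toNat, Int.toNat_of_nonneg (by omega)⟩
        have hkR : (k:ℝ) = (c:ℝ) - 1 := by exact_mod_cast congrArg (Int.cast : ℤ → ℝ) hk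
        have hlow : 4 * (l:ℝ) + 4 * (k:ℝ) + 133 / 64 < t := by
          have hlt : ((c - 1 : ℤ) : ℝ) < (t - (4 * (l:ℝ) + 133 / 64)) / 4 :=
            Int.lt_ceil.mp (by omega)
          push_cast at hlt
          rw [hkR]
          linarith
        have hhigh : t ≤ 4 * (l:ℝ) + 4 * ((k + 1 : ℕ):ℝ) + 133 / 64 := by
          have hle : (t - (4 * (l:ℝ) + 133 / 64)) / 4 ≤ ((c : ℤ) : ℝ) := Int.le_ceil _
          push_cast
          push_cast at hle
          rw [hkR]
          linarith
        refine step _ _ hlow hhigh ?_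
        rw [phi_cell (k + 1) (by omega), psi_cellA k (by omega)]
        push_cast
        linarith
      rcases le_or_gt t (4 * (l:ℝ) + 4 * (m:ℝ) + 67 / 32) with hE | hE
      · refine step (4 * (l:ℝ) + 4 * (M':ℝ) + 133 / 64) _ hD hE ?_
        rw [phi_topramp, psi_cellA M' (by omega)]
        linarith [hMr]
      rcases le_or_gt t (4 * (l:ℝ) + 4 * (m:ℝ) + 3) with hF | hF
      · refine step (4 * (l:ℝ) + 4 * (m:ℝ) + 67 / 32) _ hE hF ?_
        rw [phi_toppt, psi_topramp]
      -- top pieces: t ∈ (4l+4m+3, 4l+4m+7/2)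
      have hPsiT : PsiF m l t = t + 4 := psi_top (by linarith)
      rcases le_or_gt t (4 * (l:ℝ) + 4 * (m:ℝ) + 3 + 1 / 16) with hG | hG
      · have e := phi_tA1 (m := m) (l := l) (d := t - (4 * (l:ℝ) + 4 * (m:ℝ) + 3))
          (by linarith) (by linarith)
        rw [show 4 * (l:ℝ) + 4 * (m:ℝ) + 3 + (t - (4 * (l:ℝ) + 4 * (m:ℝ) + 3)) = t by ring] at e
        rw [e, hPsiT]
        linarith
      rcases le_or_gt t (4 * (l:ℝ) + 4 * (m:ℝ) + 3 + 1 / 8) with hH | hH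
      · have e := phi_tA2 (m := m) (l := l) (d := t - (4 * (l:ℝ) + 4 * (m:ℝ) + 3))
          (by linarith) (by linarith)
        rw [show 4 * (l:ℝ) + 4 * (m:ℝ) + 3 + (t - (4 * (l:ℝ) + 4 * (m:ℝ) + 3)) = t by ring] at e
        rw [e, hPsiT]
        linarith
      rcases le_or_gt t (4 * (l:ℝ) + 4 * (m:ℝ) + 13 / 4) with hI | hI
      · have e := phi_tA3 (m := m) (l := l) (d := t - (4 * (l:ℝ) + 4 * (m:ℝ) + 3))
          (by linarith) (by linarith)
        rw [show 4 * (l:ℝ) + 4 * (m:ℝ) + 3 + (t - (4 * (l:ℝ) + 4 * (m:ℝ) + 3)) = t by ring] at e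
        rw [e, hPsiT]
        linarith
      · have e := phi_tB (m := m) (l := l) (e := t - (4 * (l:ℝ) + 4 * (m:ℝ) + 13 / 4))
          (by linarith) (by push_cast at hhi; linarith)
        rw [show 4 * (l:ℝ) + 4 * (m:ℝ) + 13 / 4 + (t - (4 * (l:ℝ) + 4 * (m:ℝ) + 13 / 4)) = t
          by ring] at e
        rw [e, hPsiT]
        linarith
  · -- escape
    intro η hη1 hη2
    have main : ∀ j : ℕ, j ≤ m → 4 * (l:ℝ) + 4 * (j:ℝ) + 187 / 64 ≤
        (Cfun m l X0i X1i)^[j + 1] η := by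
      intro j
      induction j with
      | zero =>
        intro _
        have hb : 4 * (l:ℝ) + 4 * ((0:ℕ):ℝ) + 187 / 64 ≤ Cfun m l X0i X1i η := by
          rw [hCle η]
          rw [phi_esc 0 (by omega)]
          have w : PsiF m l (4 * (l:ℝ) - 7 / 2) ≤ PsiF m l η := hPsiStrict.monotone hη1
          rw [psi_esc0 hlr] at w
          push_cast
          linarith
        simpa using hb
      | succ j ih =>
        intro hj
        have hjm : j ≤ m := by omega
        rw [Function.iterate_succ_apply']
        have hc : 4 * (l:ℝ) + 4 * ((j + 1 : ℕ):ℝ) + 187 / 64 ≤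
            Cfun m l X0i X1i (4 * (l:ℝ) + 4 * (j:ℝ) + 187 / 64) := by
          rw [hCle]
          rw [phi_esc (j + 1) (by omega), psi_escK j (by omega)]
          push_cast
          linarith
        exact le_trans hc (hCmono (ih hjm))
    have fin := main m le_rfl
    have last : 4 * (l:ℝ) + 4 * (m:ℝ) + 827 / 256 ≤ (Cfun m l X0i X1i)^[m + 2] η := by
      rw [show m + 2 = (m + 1) + 1 from rfl, Function.iterate_succ_apply']
      have hc : 4 * (l:ℝ) + 4 * (m:ℝ) + 827 / 256 ≤
          Cfun m l X0i X1i (4 * (l:ℝ) + 4 * (m:ℝ) + 187 / 64) := by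
        rw [hCle]
        rw [phi_esctop, psi_esctop]
      exact le_trans hc (hCmono fin)
    push_cast at last ⊢
    linarith
end

section
/- With X_0, X_1 the modified generators of Thompson's group F constructed with parameters b (sufficiently large) and m ≥ 1, the elements S = X_0 X_2 X_1^{-2} and T = X_0² X_2 X_4 X_3^{-2} X_1^{-1} X_0^{-1} (where X_i = X_0^{1−i} X_1 X_0^{i−1}) have support inside (b−5, ∞) contained in the interval (b − 5/2, b + 4m + 3 + 1/8). -/
/-- `S = X_0 X_2 X_1⁻²` (right action, with `X_2 = X_0⁻¹ X_1 X_0`), given inverse functions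
for `X_0` and `X_1`. -/
noncomputable def Sfun (m l : ℕ) (X0i X1i : ℝ → ℝ) (t : ℝ) : ℝ :=
  X1i (X1i (X0fun m l (X1fun m l (X0i (X0fun m l t)))))

/-- `T = X_0² X_2 X_4 X_3⁻² X_1⁻¹ X_0⁻¹` (right action, with `X_i = X_0^{1−i} X_1 X_0^{i−1}`),
given inverse functions for `X_0` and `X_1`. -/
noncomputable def Tfun (m l : ℕ) (X0i X1i : ℝ → ℝ) (t : ℝ) : ℝ :=
  let f0 := X0fun m l
  let f1 := X1fun m l
  let u1 := f0 (f0 t)                                   -- X_0²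
  let u2 := f0 (f1 (X0i u1))                            -- X_2 = X_0⁻¹ X_1 X_0
  let u3 := f0 (f0 (f0 (f1 (X0i (X0i (X0i u2))))))      -- X_4 = X_0⁻³ X_1 X_0³
  let u4 := f0 (f0 (X1i (X0i (X0i u3))))                -- X_3⁻¹ = X_0⁻² X_1⁻¹ X_0²
  let u5 := f0 (f0 (X1i (X0i (X0i u4))))                -- X_3⁻¹
  X0i (X1i u5)                                          -- X_1⁻¹ X_0⁻¹


lemma X0_left (m l : ℕ) (u : ℝ) (h1 : 1 < u) (h2 : u ≤ 4 * (l : ℝ) - 3 / 2) :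
    X0fun m l u = u + 1 := by
  unfold X0fun xF
  push_cast
  rw [if_pos h2, if_neg (by linarith), if_neg (by linarith)]

lemma X1_left (m l : ℕ) (u : ℝ) (h1 : 2 < u) (h2 : u ≤ 4 * (l : ℝ) - 1 / 2) :
    X1fun m l u = u + 1 := by
  unfold X1fun
  rw [X0_left m l (u - 1) (by linarith) (by linarith)]
  ring

lemma X0_right (m l : ℕ) (u : ℝ) (h : 4 * (l : ℝ) + 4 * m + 5 / 2 ≤ u) :
    X0fun m l u = u + 1 := by
  have hm : (0:ℝ) ≤ m := Nat.cast_nonneg m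
  unfold X0fun
  split_ifs <;> linarith

lemma X1_right (m l : ℕ) (u : ℝ) (h : 4 * (l : ℝ) + 4 * m + 7 / 2 ≤ u) :
    X1fun m l u = u + 1 := by
  unfold X1fun
  rw [X0_right m l (u - 1) (by linarith)]
  ring

lemma X0_big (m l : ℕ) (u : ℝ) (h : 4 * (l : ℝ) + 4 * m + 17 / 8 ≤ u) :
    4 * (l : ℝ) + 4 * m + 5 / 2 ≤ X0fun m l u := by
  have hm : (0:ℝ) ≤ m := Nat.cast_nonneg m
  unfold X0fun
  split_ifs <;> linarith

lemma X1_big (m l : ℕ) (u : ℝ) (h : 4 * (l : ℝ) + 4 * m + 25 / 8 ≤ u) :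
    4 * (l : ℝ) + 4 * m + 7 / 2 ≤ X1fun m l u := by
  unfold X1fun
  have := X0_big m l (u - 1) (by linarith)
  linarith

lemma S_fixed_left (m l : ℕ) (X0i X1i : ℝ → ℝ)
    (hli0 : Function.LeftInverse X0i (X0fun m l))
    (hli1 : Function.LeftInverse X1i (X1fun m l))
    (t : ℝ) (h1 : 2 < t) (h2 : t ≤ 4 * (l : ℝ) - 5 / 2) :
    Sfun m l X0i X1i t = t := by
  have h0 : ∀ x, X0i (X0fun m l x) = x := hli0
  have h1' : ∀ x, X1i (X1fun m l x) = x := hli1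
  have e3 : X1fun m l t = t + 1 := by
    rw [X1_left m l t h1 (by linarith)]
  have e1 : X0fun m l (t + 1) = t + 2 := by
    rw [X0_left m l (t + 1) (by linarith) (by linarith)]; ring
  have e4 : X1fun m l (t + 1) = t + 2 := by
    rw [X1_left m l (t + 1) (by linarith) (by linarith)]; ring
  have j0 : X1i (t + 1) = t := by rw [← e3, h1']
  have j1 : X1i (t + 2) = t + 1 := by rw [← e4, h1']
  simp only [Sfun, h0, e3, e1, j1, j0]

lemma S_fixed_right (m l : ℕ) (X0i X1i : ℝ → ℝ)
    (hli0 : Function.LeftInverse X0i (X0fun m l))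
    (hli1 : Function.LeftInverse X1i (X1fun m l))
    (t : ℝ) (h2 : 4 * (l : ℝ) + 4 * m + 3 + 1 / 8 ≤ t) :
    Sfun m l X0i X1i t = t := by
  have h0 : ∀ x, X0i (X0fun m l x) = x := hli0
  have h1' : ∀ x, X1i (X1fun m l x) = x := hli1
  set w := X1fun m l t with hwdef
  have hw : 4 * (l : ℝ) + 4 * m + 7 / 2 ≤ w := X1_big m l t (by linarith)
  have ew : X0fun m l w = w + 1 := X0_right m l w (by linarith)
  have ew1 : X1fun m l w = w + 1 := X1_right m l w (by linarith)
  have jw1 : X1i (w + 1) = w := by rw [← ew1, h1']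
  have jw : X1i w = t := by rw [hwdef, h1']
  simp only [Sfun, h0, ← hwdef, ew, jw1, jw]

lemma T_fixed_left (m l : ℕ) (X0i X1i : ℝ → ℝ)
    (hli0 : Function.LeftInverse X0i (X0fun m l))
    (hli1 : Function.LeftInverse X1i (X1fun m l))
    (t : ℝ) (h1 : 2 < t) (h2 : t ≤ 4 * (l : ℝ) - 5 / 2) :
    Tfun m l X0i X1i t = t := by
  have h0 : ∀ x, X0i (X0fun m l x) = x := hli0
  have h1' : ∀ x, X1i (X1fun m l x) = x := hli1
  have e0 : X0fun m l t = t + 1 := X0_left m l t (by linarith) (by linarith)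
  have e1 : X0fun m l (t + 1) = t + 2 := by
    rw [X0_left m l (t + 1) (by linarith) (by linarith)]; ring
  have e3 : X1fun m l t = t + 1 := X1_left m l t h1 (by linarith)
  have e4 : X1fun m l (t + 1) = t + 2 := by
    rw [X1_left m l (t + 1) (by linarith) (by linarith)]; ring
  have i0 : X0i (t + 1) = t := by rw [← e0, h0]
  have i1 : X0i (t + 2) = t + 1 := by rw [← e1, h0]
  have j0 : X1i (t + 1) = t := by rw [← e3, h1']
  have j1 : X1i (t + 2) = t + 1 := by rw [← e4, h1']
  simp only [Tfun, h0, h1', e0, e1, e3, e4, i0, i1, j0, j1]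

lemma T_fixed_right (m l : ℕ) (X0i X1i : ℝ → ℝ)
    (hli0 : Function.LeftInverse X0i (X0fun m l))
    (hli1 : Function.LeftInverse X1i (X1fun m l))
    (t : ℝ) (h2 : 4 * (l : ℝ) + 4 * m + 3 + 1 / 8 ≤ t) :
    Tfun m l X0i X1i t = t := by
  have h0 : ∀ x, X0i (X0fun m l x) = x := hli0
  have h1' : ∀ x, X1i (X1fun m l x) = x := hli1
  have e0 : X0fun m l t = t + 1 := X0_right m l t (by linarith)
  have e1 : X0fun m l (t + 1) = t + 2 := by
    rw [X0_right m l (t + 1) (by linarith)]; ring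
  have e2 : X0fun m l (t + 2) = t + 3 := by
    rw [X0_right m l (t + 2) (by linarith)]; ring
  have e4 : X1fun m l (t + 1) = t + 2 := by
    rw [X1_right m l (t + 1) (by linarith)]; ring
  set w := X1fun m l t with hwdef
  have hw : 4 * (l : ℝ) + 4 * m + 7 / 2 ≤ w := X1_big m l t (by linarith)
  have f0 : X0fun m l w = w + 1 := X0_right m l w (by linarith)
  have f1 : X0fun m l (w + 1) = w + 2 := by
    rw [X0_right m l (w + 1) (by linarith)]; ring
  have f2 : X0fun m l (w + 2) = w + 3 := by
    rw [X0_right m l (w + 2) (by linarith)]; ring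
  have g1 : X1fun m l w = w + 1 := X1_right m l w (by linarith)
  have i0 : X0i (t + 1) = t := by rw [← e0, h0]
  have i1 : X0i (t + 2) = t + 1 := by rw [← e1, h0]
  have i2 : X0i (t + 3) = t + 2 := by rw [← e2, h0]
  have k0 : X0i (w + 1) = w := by rw [← f0, h0]
  have k1 : X0i (w + 2) = w + 1 := by rw [← f1, h0]
  have k2 : X0i (w + 3) = w + 2 := by rw [← f2, h0]
  have jw1 : X1i (w + 1) = w := by rw [← g1, h1']
  have jw : X1i w = t := by rw [hwdef, h1']
  have j1 : X1i (t + 2) = t + 1 := by rw [← e4, h1']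
  simp only [Tfun, ← hwdef, e0, e1, e2, e4, f0, f1, f2, i0, i1, i2, k0, k1, k2, jw1, jw, j1]

/-- For all sufficiently large multiples `b = 4l` of `4` and all `m ≥ 1`, the supports of
`S = X_0 X_2 X_1⁻²` and `T = X_0² X_2 X_4 X_3⁻² X_1⁻¹ X_0⁻¹` inside `(b−5, ∞)` are contained
in the interval `(b − 5/2, b + 4m + 3 + 1/8)`. -/
theorem S_T_support :
    ∃ N : ℕ, ∀ m l : ℕ, 1 ≤ m → N ≤ l → ∀ X0i X1i : ℝ → ℝ,
      Function.LeftInverse X0i (X0fun m l) → Function.RightInverse X0i (X0fun m l) →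
      Function.LeftInverse X1i (X1fun m l) → Function.RightInverse X1i (X1fun m l) →
      (∀ t : ℝ, 4 * (l : ℝ) - 5 < t → Sfun m l X0i X1i t ≠ t →
        t ∈ Set.Ioo (4 * (l : ℝ) - 5 / 2) (4 * (l : ℝ) + 4 * m + 3 + 1 / 8)) ∧
      (∀ t : ℝ, 4 * (l : ℝ) - 5 < t → Tfun m l X0i X1i t ≠ t →
        t ∈ Set.Ioo (4 * (l : ℝ) - 5 / 2) (4 * (l : ℝ) + 4 * m + 3 + 1 / 8)) := by
  refine ⟨2, fun m l hm hl X0i X1i hli0 hri0 hli1 hri1 => ?_⟩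
  have hl' : (8:ℝ) ≤ 4 * (l : ℝ) := by
    have : (2:ℝ) ≤ (l : ℝ) := by exact_mod_cast hl
    linarith
  constructor
  · intro t ht hS
    by_contra hmem
    apply hS
    rcases le_or_gt t (4 * (l : ℝ) - 5 / 2) with hc | hc
    · exact S_fixed_left m l X0i X1i hli0 hli1 t (by linarith) hc
    · have hc2 : 4 * (l : ℝ) + 4 * m + 3 + 1 / 8 ≤ t := by
        by_contra hc3
        push_neg at hc3
        exact hmem ⟨hc, hc3⟩
      exact S_fixed_right m l X0i X1i hli0 hli1 t hc2
  · intro t ht hT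
    by_contra hmem
    apply hT
    rcases le_or_gt t (4 * (l : ℝ) - 5 / 2) with hc | hc
    · exact T_fixed_left m l X0i X1i hli0 hli1 t (by linarith) hc
    · have hc2 : 4 * (l : ℝ) + 4 * m + 3 + 1 / 8 ≤ t := by
        by_contra hc3
        push_neg at hc3
        exact hmem ⟨hc, hc3⟩
      exact T_fixed_right m l X0i X1i hli0 hli1 t hc2
end
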